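/- arXiv:1401.4178 — 2 statements merged into one kernel-verified Lean document; each statement's English description precedes it below -/
import Mathlib

section
/- Let A, A₀, B, B₀ partition a vertex set V and let J be a matching exceptional system with fictive edge matching J* = J*_A + J*_B. If C_A is a Hamilton cycle on A consistent with J*_A and C_B is a Hamilton cycle on B consistent with J*_B, then C_A + C_B − J* + J is the union of a Hamilton cycle on A' = A₀ ∪ A and a Hamilton cycle on B' = B₀ ∪ B. In particular, if |A'| and |B'| are both even, it is the union of two edge-disjoint perfect matchings on V. -/
open SimpleGraph

/-- The degree of a vertex, as the cardinality of its neighbourhood. -/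
noncomputable def degS {V : Type*} (J : SimpleGraph V) (v : V) : ℕ := (J.neighborSet v).ncard

/-- A path system: a graph which is a union of vertex-disjoint paths. -/
def PathSystem {V : Type*} (J : SimpleGraph V) : Prop := J.IsAcyclic ∧ ∀ v, degS J v ≤ 2

/-- The matching `J*_{AB}` induced by the nontrivial paths of a path system `J`. -/
def starAB {V : Type*} (J : SimpleGraph V) : SimpleGraph V where
  Adj x y := x ≠ y ∧ degS J x = 1 ∧ degS J y = 1 ∧ J.Reachable x y
  symm := ⟨fun _ _ h => ⟨h.1.symm, h.2.2.1, h.2.1, h.2.2.2.symm⟩⟩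
  loopless := ⟨fun _ h => h.1 rfl⟩

/-- The cycle graph traced out by `f : ZMod N → V`. -/
def cycOn {V : Type*} {N : ℕ} (f : ZMod N → V) : SimpleGraph V :=
  SimpleGraph.fromEdgeSet {e | ∃ i : ZMod N, e = s(f i, f (i + 1))}

/-- `H` is a Hamilton cycle on the vertex set `A`. -/
def IsHamCycleOn {V : Type*} (H : SimpleGraph V) (A : Set V) : Prop :=
  ∃ (N : ℕ) (f : ZMod N → V), 3 ≤ N ∧ Function.Injective f ∧ Set.range f = A ∧ H = cycOn f

set_option linter.unusedSectionVars false
set_option linter.unusedVariables false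
set_option maxHeartbeats 1000000

section Helpers

variable {V : Type*} [Finite V]

lemma degS_pos_of_adj {G : SimpleGraph V} {a b : V} (h : G.Adj a b) : 1 ≤ degS G a := by
  exact (Set.ncard_pos (Set.toFinite _)).mpr ⟨b, h⟩

lemma nbr_empty_of_degS_zero {G : SimpleGraph V} {a : V} (h : degS G a = 0) :
    G.neighborSet a = ∅ := by
  rw [degS, Set.ncard_eq_zero (Set.toFinite _)] at h; exact h

lemma nbr_singleton {G : SimpleGraph V} {a x : V} (h : degS G a = 1) (hx : G.Adj a x) :
    G.neighborSet a = {x} := by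
  rw [degS, Set.ncard_eq_one] at h
  obtain ⟨c, hc⟩ := h
  have : x ∈ G.neighborSet a := hx
  rw [hc] at this ⊢
  simp_all

lemma two_nbrs {G : SimpleGraph V} {b a c d : V} (h2 : degS G b = 2) (ha : G.Adj b a)
    (hc : G.Adj b c) (hd : G.Adj b d) (hca : c ≠ a) (hda : d ≠ a) : c = d := by
  rw [degS, Set.ncard_eq_two] at h2
  obtain ⟨x, y, hxy, hset⟩ := h2
  have ha' : a ∈ G.neighborSet b := ha
  have hc' : c ∈ G.neighborSet b := hc
  have hd' : d ∈ G.neighborSet b := hd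
  rw [hset] at ha' hc' hd'
  simp only [Set.mem_insert_iff, Set.mem_singleton_iff] at ha' hc' hd'
  rcases ha' with rfl | rfl <;> rcases hc' with rfl | rfl <;> rcases hd' with rfl | rfl <;>
    simp_all

lemma nbr_pair {G : SimpleGraph V} {b x y : V} (h2 : degS G b = 2) (hx : G.Adj b x)
    (hy : G.Adj b y) (hxy : x ≠ y) : G.neighborSet b = {x, y} := by
  have hsub : ({x, y} : Set V) ⊆ G.neighborSet b := by
    intro z hz; rcases hz with rfl | hz
    · exact hx
    · rcases hz with rfl; exact hy
  exact (Set.eq_of_subset_of_ncard_le hsub (by rw [Set.ncard_pair hxy, ← degS]; omega)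
    (Set.toFinite _)).symm

/-- the "other neighbour" of `b`, avoiding `a`. -/
noncomputable def nxt (G : SimpleGraph V) (a b : V) : V :=
  open scoped Classical in
  if h : (G.neighborSet b \ {a}).Nonempty then h.choose else a

lemma nxt_spec {G : SimpleGraph V} {a b : V} (hadj : G.Adj a b) (h2 : degS G b = 2) :
    G.Adj b (nxt G a b) ∧ nxt G a b ≠ a := by
  have hne : (G.neighborSet b \ {a}).Nonempty := by
    by_contra h
    rw [Set.not_nonempty_iff_eq_empty, Set.diff_eq_empty] at h
    have := Set.ncard_le_ncard h (Set.toFinite _)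
    rw [← degS, h2, Set.ncard_singleton] at this; omega
  rw [nxt, dif_pos hne]
  have := hne.choose_spec
  exact ⟨this.1, fun h => this.2 (by simp [h])⟩

end Helpers
open SimpleGraph

section Walks

variable {V : Type*} {G : SimpleGraph V}

/-- Walk from `g 0` to `g k` along consecutive adjacencies. -/
def walkUpTo (g : ℕ → V) : ∀ (k : ℕ), (∀ m, m < k → G.Adj (g m) (g (m+1))) → G.Walk (g 0) (g k)
  | 0, _ => SimpleGraph.Walk.nil
  | (k+1), h => (walkUpTo g k (fun m hm => h m (by omega))).concat (h k (by omega))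

lemma walkUpTo_support (g : ℕ → V) (k : ℕ) (h : ∀ m, m < k → G.Adj (g m) (g (m+1))) :
    (walkUpTo g k h).support = (List.range (k+1)).map g := by
  induction k with
  | zero => rw [walkUpTo]; rw [show (1:ℕ) = 0+1 from rfl, List.range_succ]; simp
  | succ k ih =>
    rw [walkUpTo, SimpleGraph.Walk.support_concat, ih, List.range_succ (n := k+1)]
    simp [List.concat_eq_append]

lemma walkUpTo_length (g : ℕ → V) (k : ℕ) (h : ∀ m, m < k → G.Adj (g m) (g (m+1))) :
    (walkUpTo g k h).length = k := by
  induction k with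
  | zero => simp [walkUpTo]
  | succ k ih => rw [walkUpTo, SimpleGraph.Walk.length_concat, ih]

lemma reach_closed {P : V → Prop} (hcl : ∀ x y, P x → G.Adj x y → P y) :
    ∀ x y, G.Reachable x y → P x → P y := by
  intro x y hr
  obtain ⟨w⟩ := hr
  induction w with
  | nil => exact id
  | cons h p ih => exact fun hx => ih (hcl _ _ hx h)

lemma reach_map {H : SimpleGraph V} {P : V → Prop} (hcl : ∀ x y, P x → G.Adj x y → P y)
    (hedge : ∀ x y, P x → G.Adj x y → H.Adj x y) :
    ∀ x y, G.Reachable x y → P x → H.Reachable x y := by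
  intro x y hr
  obtain ⟨w⟩ := hr
  induction w with
  | nil => exact fun _ => SimpleGraph.Reachable.refl _
  | cons h p ih =>
    exact fun hx => ((hedge _ _ hx h).reachable).trans (ih (hcl _ _ hx h))

/-- A trajectory with no immediate backtracking in an acyclic graph is injective. -/
lemma trajInj (hac : G.IsAcyclic) {g : ℕ → V} {k : ℕ}
    (hadj : ∀ m, m < k → G.Adj (g m) (g (m+1)))
    (hQ : ∀ m, m + 2 ≤ k → g (m+2) ≠ g m) :
    ∀ a b, a ≤ k → b ≤ k → g a = g b → a = b := by
  by_contra hcon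
  push_neg at hcon
  -- get a minimal second index b with a repeat
  have hex : ∃ b, (∃ a, a < b ∧ b ≤ k ∧ g a = g b) := by
    obtain ⟨a, b, ha, hb, heq, hne⟩ := hcon
    rcases Nat.lt_or_ge a b with h | h
    · exact ⟨b, a, h, hb, heq⟩
    · exact ⟨a, b, by omega, ha, heq.symm⟩
  classical
  let b := Nat.find hex
  obtain ⟨a, hab, hbk, heq⟩ : ∃ a, a < b ∧ b ≤ k ∧ g a = g b := Nat.find_spec hex
  have hmin : ∀ c d, c < d → d < b → g c ≠ g d := by
    intro c d hcd hdb hgcd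
    exact Nat.find_min hex hdb ⟨c, hcd, by omega, hgcd⟩
  rcases Nat.lt_or_ge (a + 2) b with hbig | hsmall
  · -- b ≥ a+3 : contradiction with unique paths
    -- path 1 : the single edge g a -- g (a+1)
    have hadj0 : G.Adj (g a) (g (a+1)) := hadj a (by omega)
    let p1 : G.Path (g a) (g (a+1)) := ⟨hadj0.toWalk, by simp [hadj0.ne]⟩
    -- path 2 : from g b backwards to g (a+1)
    let g' : ℕ → V := fun m => g (a+1+m)
    have hadj' : ∀ m, m < b - (a+1) → G.Adj (g' m) (g' (m+1)) := by
      intro m hm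
      have h1 : a+1+(m+1) = (a+1+m)+1 := by omega
      simp only [g', h1]
      exact hadj (a+1+m) (by omega)
    let w2 : G.Walk (g' 0) (g' (b - (a+1))) := walkUpTo g' (b - (a+1)) hadj'
    have he1 : g' 0 = g (a+1) := by simp [g']
    have he2 : g' (b - (a+1)) = g a := by
      have : a+1+(b-(a+1)) = b := by omega
      simp only [g', this, heq.symm]
    let w3 : G.Walk (g a) (g (a+1)) := (w2.copy he1 he2).reverse
    have hw3sup : w3.support = ((List.range (b - (a+1) + 1)).map g').reverse := by
      simp only [w3, SimpleGraph.Walk.support_reverse, SimpleGraph.Walk.support_copy]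
      rw [walkUpTo_support]
    have hw3path : w3.IsPath := by
      rw [SimpleGraph.Walk.isPath_def, hw3sup, List.nodup_reverse]
      rw [List.nodup_map_iff_inj_on List.nodup_range]
      intro x hx y hy hgxy
      simp only [List.mem_range] at hx hy
      by_contra hne
      simp only [g'] at hgxy
      rcases Nat.lt_or_ge x y with h | h
      · rcases Nat.lt_or_ge (a+1+y) b with h2 | h2
        · exact hmin _ _ (by omega) h2 hgxy
        · -- a+1+y = b, so g(a+1+x) = g b = g a with a < a+1+x < b
          have hby : a+1+y = b := by omega
          refine hmin a (a+1+x) (by omega) (by omega) ?_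
          rw [hgxy, hby]; exact heq
      · have h' : y < x := by omega
        rcases Nat.lt_or_ge (a+1+x) b with h2 | h2
        · exact hmin _ _ (by omega) h2 hgxy.symm
        · have hbx : a+1+x = b := by omega
          refine hmin a (a+1+y) (by omega) (by omega) ?_
          rw [← hgxy, hbx]; exact heq
    let p2 : G.Path (g a) (g (a+1)) := ⟨w3, hw3path⟩
    have := hac.path_unique p1 p2
    have hlen : (p1 : G.Walk (g a) (g (a+1))).length = (p2 : G.Walk (g a) (g (a+1))).length := by
      rw [this]
    have hl1 : (p1 : G.Walk (g a) (g (a+1))).length = 1 := by simp [p1]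
    have hl2 : (p2 : G.Walk (g a) (g (a+1))).length = b - (a+1) := by
      simp only [p2, w3, SimpleGraph.Walk.length_reverse, SimpleGraph.Walk.length_copy]
      rw [walkUpTo_length]
    omega
  · rcases Nat.eq_or_lt_of_le hsmall with hb2 | hb1
    · exact hQ a (by omega) (by rw [hb2] at heq; exact heq.symm)
    · have hb1' : b = a + 1 := by omega
      rw [hb1'] at heq
      exact (hadj a (by omega)).ne heq

end Walks

section Leaf

variable {V : Type*} [Finite V]

lemma leafReach {J : SimpleGraph V} (hac : J.IsAcyclic) (hdeg : ∀ x, degS J x ≤ 2)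
    {v u : V} (hadj : J.Adj v u) :
    ∃ w, degS J w = 1 ∧ J.Reachable v w ∧
      (degS J v = 1 → w ≠ v ∧ ∀ w', degS J w' = 1 → w' ≠ v → J.Reachable v w' → w' = w) := by
  classical
  set F : V × V → V × V := fun p => (p.2, nxt J p.1 p.2) with hF
  set g : ℕ → V := fun n => (F^[n] (v, u)).1 with hg
  have hg0 : g 0 = v := rfl
  have hgsnd : ∀ n, (F^[n] (v, u)).2 = g (n+1) := by
    intro n
    rw [hg]
    simp only [Function.iterate_succ_apply']
    rfl
  have hg1 : g 1 = u := by rw [← hgsnd 0]; rfl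
  have hgstep : ∀ n, g (n+2) = nxt J (g n) (g (n+1)) := by
    intro n
    rw [← hgsnd (n+1), Function.iterate_succ_apply']
    show (F (F^[n] (v,u))).2 = nxt J (g n) (g (n+1))
    rw [hF]
    simp only
    rw [hgsnd n]
  -- degrees along the trajectory are ≥ 1 given adjacency
  -- existence of a leaf index
  have hex : ∃ n, 0 < n ∧ degS J (g n) = 1 := by
    by_contra hno
    push_neg at hno
    -- invariants hold forever
    have hinv : ∀ n, J.Adj (g n) (g (n+1)) ∧ g (n+2) ≠ g n := by
      intro n
      induction n with
      | zero =>
        have h0 : J.Adj (g 0) (g 1) := by rw [hg0, hg1]; exact hadj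
        have hd : degS J (g 1) = 2 := by
          have := hdeg (g 1); have := degS_pos_of_adj h0.symm; have := hno 1 Nat.one_pos; omega
        have := nxt_spec h0 hd
        rw [← hgstep 0] at this
        exact ⟨h0, this.2⟩
      | succ m ih =>
        have h0 : J.Adj (g (m+1)) (g (m+2)) := by
          have hd : degS J (g (m+1)) = 2 := by
            have := hdeg (g (m+1)); have := degS_pos_of_adj ih.1.symm
            have := hno (m+1) (Nat.succ_pos m); omega
          have := nxt_spec ih.1 hd
          rw [← hgstep m] at this
          exact this.1
        have hd2 : degS J (g (m+2)) = 2 := by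
          have := hdeg (g (m+2)); have := degS_pos_of_adj h0.symm
          have := hno (m+2) (by omega); omega
        have := nxt_spec h0 hd2
        rw [← hgstep (m+1)] at this
        exact ⟨h0, this.2⟩
    have hinj : Function.Injective g := by
      intro a b hab
      exact trajInj hac (k := max a b + 1) (fun m _ => (hinv m).1)
        (fun m _ => (hinv m).2) a b (by omega) (by omega) hab
    obtain ⟨a, b, hne, heq⟩ := Finite.exists_ne_map_eq_of_infinite g
    exact hne (hinj heq)
  let n0 := Nat.find hex
  have hn0 : 0 < n0 ∧ degS J (g n0) = 1 := Nat.find_spec hex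
  have hmin : ∀ m, 0 < m → m < n0 → degS J (g m) ≠ 1 := by
    intro m h1 h2 h3
    exact Nat.find_min hex h2 ⟨h1, h3⟩
  -- invariants below n0
  have hinv : ∀ m, m < n0 → J.Adj (g m) (g (m+1)) ∧ (m + 2 ≤ n0 → g (m+2) ≠ g m) := by
    intro m hm
    induction m with
    | zero =>
      have h0 : J.Adj (g 0) (g 1) := by rw [hg0, hg1]; exact hadj
      refine ⟨h0, fun h2 => ?_⟩
      have hd : degS J (g 1) = 2 := by
        have := hdeg (g 1); have := degS_pos_of_adj h0.symm
        have := hmin 1 Nat.one_pos (by omega); omega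
      have := nxt_spec h0 hd
      rw [← hgstep 0] at this
      exact this.2
    | succ m ih =>
      have ihm := ih (by omega)
      have hd : degS J (g (m+1)) = 2 := by
        have := hdeg (g (m+1)); have := degS_pos_of_adj ihm.1.symm
        have := hmin (m+1) (by omega) (by omega); omega
      have hs := nxt_spec ihm.1 hd
      rw [← hgstep m] at hs
      refine ⟨hs.1, fun h2 => ?_⟩
      have hd2 : degS J (g (m+2)) = 2 := by
        have := hdeg (g (m+2)); have := degS_pos_of_adj hs.1.symm
        have := hmin (m+2) (by omega) (by omega); omega
      have := nxt_spec hs.1 hd2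
      rw [← hgstep (m+1)] at this
      exact this.2
  have hadjto : ∀ m, m < n0 → J.Adj (g m) (g (m+1)) := fun m hm => (hinv m hm).1
  have hQto : ∀ m, m + 2 ≤ n0 → g (m+2) ≠ g m := by
    intro m hm
    exact (hinv m (by omega)).2 hm
  have hreach : J.Reachable v (g n0) := by
    rw [← hg0]
    exact ⟨walkUpTo g n0 hadjto⟩
  have hinj : ∀ a b, a ≤ n0 → b ≤ n0 → g a = g b → a = b := trajInj hac hadjto hQto
  refine ⟨g n0, hn0.2, hreach, fun hv1 => ?_⟩
  constructor
  · rw [← hg0]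
    intro h
    have := hinj n0 0 (le_refl _) (by omega) h
    omega
  · -- uniqueness: the component of v is exactly {g 0, ..., g n0}
    intro w' hw'1 hw'v hw'r
    have hcl : ∀ x y, (∃ m, m ≤ n0 ∧ g m = x) → J.Adj x y → (∃ m, m ≤ n0 ∧ g m = y) := by
      rintro x y ⟨m, hm, rfl⟩ hxy
      rcases Nat.eq_zero_or_pos m with rfl | hmpos
      · -- m = 0 : nbr v = {g 1}
        have h0 : J.Adj (g 0) (g 1) := by rw [hg0, hg1]; exact hadj
        have hnb : J.neighborSet (g 0) = {g 1} := by
          apply nbr_singleton _ h0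
          rw [hg0]; exact hv1
        have : y ∈ J.neighborSet (g 0) := hxy
        rw [hnb] at this
        exact ⟨1, by omega, this.symm⟩
      rcases Nat.eq_or_lt_of_le hm with heqm | hmlt
      · -- m = n0 : nbr = {g (m-1)}
        have hpd : J.Adj (g (m-1)) (g m) := by
          have := hadjto (m-1) (by omega)
          have h1 : m - 1 + 1 = m := by omega
          rwa [h1] at this
        have hdm : degS J (g m) = 1 := by rw [heqm]; exact hn0.2
        have hnb : J.neighborSet (g m) = {g (m-1)} := nbr_singleton hdm hpd.symm
        have : y ∈ J.neighborSet (g m) := hxy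
        rw [hnb] at this
        exact ⟨m-1, by omega, this.symm⟩
      · -- 0 < m < n0 : degree 2, nbr = {g (m-1), g (m+1)}
        have hd : degS J (g m) = 2 := by
          have := hdeg (g m)
          have := degS_pos_of_adj hxy
          have := hmin m hmpos hmlt; omega
        have hpd : J.Adj (g m) (g (m-1)) := by
          have := hadjto (m-1) (by omega)
          have h1 : m - 1 + 1 = m := by omega
          rw [h1] at this
          exact this.symm
        have hsd : J.Adj (g m) (g (m+1)) := hadjto m hmlt
        have hne : g (m-1) ≠ g (m+1) := by
          intro h
          have := hinj (m-1) (m+1) (by omega) (by omega) h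
          omega
        have hnb := nbr_pair hd hpd hsd hne
        have : y ∈ J.neighborSet (g m) := hxy
        rw [hnb] at this
        rcases this with rfl | h
        · exact ⟨m-1, by omega, rfl⟩
        · exact ⟨m+1, by omega, h.symm⟩
    have hw'mem : ∃ m, m ≤ n0 ∧ g m = w' := by
      refine reach_closed hcl v w' hw'r ⟨0, by omega, hg0⟩
    obtain ⟨m, hm, rfl⟩ := hw'mem
    rcases Nat.eq_zero_or_pos m with rfl | hmpos
    · exact absurd hg0 hw'v
    rcases Nat.eq_or_lt_of_le hm with heqm | hmlt
    · rw [heqm]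
    · exact absurd hw'1 (hmin m hmpos hmlt)

end Leaf

section TwoRegular

variable {V : Type*} [Finite V]

lemma hamOfTwoRegular {G : SimpleGraph V} {S : Set V}
    (hdeg : ∀ v ∈ S, degS G v = 2)
    (hsupp : ∀ v, v ∉ S → G.neighborSet v = ∅)
    (hconn : ∀ u ∈ S, ∀ v ∈ S, G.Reachable u v)
    (hcard : 3 ≤ S.ncard) : IsHamCycleOn G S := by
  classical
  have memS : ∀ {x y : V}, x ∈ S → G.Adj x y → y ∈ S := by
    intro x y hx hxy
    by_contra hy
    have := hsupp y hy
    have hmem : x ∈ G.neighborSet y := hxy.symm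
    rw [this] at hmem
    exact hmem
  obtain ⟨v0, hv0⟩ : S.Nonempty := by
    rw [← Set.ncard_pos (Set.toFinite _)] at *; omega
  obtain ⟨v1, hv1⟩ : (G.neighborSet v0).Nonempty := by
    rw [← Set.ncard_pos (Set.toFinite _)]
    rw [← degS, hdeg v0 hv0]; omega
  have hadj01 : G.Adj v0 v1 := hv1
  set F : V × V → V × V := fun p => (p.2, nxt G p.1 p.2) with hF
  set g : ℕ → V := fun n => (F^[n] (v0, v1)).1 with hg
  have hg0 : g 0 = v0 := rfl
  have hgsnd : ∀ n, (F^[n] (v0, v1)).2 = g (n+1) := by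
    intro n
    rw [hg]
    simp only [Function.iterate_succ_apply']
    rfl
  have hg1 : g 1 = v1 := by rw [← hgsnd 0]; rfl
  have hgstep : ∀ n, g (n+2) = nxt G (g n) (g (n+1)) := by
    intro n
    rw [← hgsnd (n+1), Function.iterate_succ_apply']
    show (F (F^[n] (v0,v1))).2 = nxt G (g n) (g (n+1))
    rw [hF]
    simp only
    rw [hgsnd n]
  -- global invariants
  have hinv : ∀ n, g n ∈ S ∧ G.Adj (g n) (g (n+1)) := by
    intro n
    induction n with
    | zero => exact ⟨hv0 , by rw [hg0, hg1]; exact hadj01⟩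
    | succ m ih =>
      have hS : g (m+1) ∈ S := memS ih.1 ih.2
      have := nxt_spec ih.2 (hdeg _ hS)
      rw [← hgstep m] at this
      exact ⟨hS, this.1⟩
  have hmemg : ∀ n, g n ∈ S := fun n => (hinv n).1
  have hadj : ∀ n, G.Adj (g n) (g (n+1)) := fun n => (hinv n).2
  have hdeg' : ∀ n, degS G (g n) = 2 := fun n => hdeg _ (hmemg n)
  have hQ : ∀ n, g (n+2) ≠ g n := by
    intro n
    have := nxt_spec (hadj n) (hdeg' (n+1))
    rw [← hgstep n] at this
    exact this.2
  -- the collapse lemma: the trajectory cannot reverse on itself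
  have collapse : ∀ d a, 1 ≤ a → g a = g (a+d) → g (a+1) = g (a+d-1) → False := by
    intro d
    induction d using Nat.strong_induction_on with
    | _ d ih =>
      rcases d with _ | d
      · intro a ha h1 h2
        have h3 := hQ (a-1)
        rw [show a-1+2 = a+1 by omega] at h3
        rw [show a+0-1 = a-1 by omega] at h2
        exact h3 h2
      rcases d with _ | e
      · intro a ha h1 h2
        rw [show a+1-1 = a by omega] at h2
        exact (hadj a).ne h2.symm
      · intro a ha h1 h2
        have h2' : g (a+1) = g (a+e+1) := by
          rw [show a+e+1 = a+(e+1+1)-1 by omega]; exact h2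
        have h1' : g a = g (a+e+2) := by
          rw [show a+e+2 = a+(e+1+1) by omega]; exact h1
        have hA : G.Adj (g (a+e+2)) (g (a+e+1)) := by
          have := hadj (a+e+1)
          rw [show a+e+1+1 = a+e+2 by omega] at this
          exact this.symm
        have hs := nxt_spec hA (hdeg' (a+e+1))
        have hkey : nxt G (g (a+e+2)) (g (a+e+1)) = g (a+e) := by
          refine two_nbrs (hdeg' (a+e+1)) hA.symm hs.1 (hadj (a+e)).symm hs.2 ?_
          exact (hQ (a+e)).symm
        have hnew : g (a+2) = g (a+e) := by
          rw [hgstep a, h1', h2', hkey]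
        refine ih e (by omega) (a+1) (by omega) ?_ ?_
        · rw [show a+1+e = a+e+1 by omega]; exact h2'
        · rw [show a+1+e-1 = a+e by omega, show a+1+1 = a+2 by omega]; exact hnew
  -- backward determinism and existence of a period
  have hback : ∀ n m, F^[n+1] (v0,v1) = F^[m+1] (v0,v1) → F^[n] (v0,v1) = F^[m] (v0,v1) := by
    intro n m h
    have e1 : g (n+1) = g (m+1) := by
      have := congrArg Prod.fst h
      simpa only [hg] using this
    have e2 : g (n+2) = g (m+2) := by
      have := congrArg Prod.snd h
      rwa [hgsnd (n+1), hgsnd (m+1)] at this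
    have e0 : g n = g m := by
      refine two_nbrs (hdeg' (n+1)) (hadj (n+1)) (hadj n).symm ?_ (hQ n).symm ?_
      · rw [e1]; exact (hadj m).symm
      · rw [e2]; exact (hQ m).symm
    have : (F^[n] (v0,v1)) = (g n, g (n+1)) := by
      rw [← hgsnd n]
    have hm : (F^[m] (v0,v1)) = (g m, g (m+1)) := by
      rw [← hgsnd m]
    rw [this, hm, e0, e1]
  have hcancel : ∀ i j, i ≤ j → F^[i] (v0,v1) = F^[j] (v0,v1) → F^[j-i] (v0,v1) = (v0,v1) := by
    intro i
    induction i with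
    | zero => intro j _ h; rw [Nat.sub_zero]; exact h.symm
    | succ i ih =>
      intro j hij h
      obtain ⟨j', rfl⟩ : ∃ j', j = j' + 1 := ⟨j - 1, by omega⟩
      have := hback i j' h
      have := ih j' (by omega) this
      rwa [show j' + 1 - (i+1) = j' - i by omega]
  have hper : ∃ p, 0 < p ∧ F^[p] (v0,v1) = (v0,v1) := by
    obtain ⟨a, b, hne, heq⟩ := Finite.exists_ne_map_eq_of_infinite (fun n => F^[n] (v0,v1))
    rcases Nat.lt_or_ge a b with h | h
    · exact ⟨b - a, by omega, hcancel a b (by omega) heq⟩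
    · exact ⟨a - b, by omega, hcancel b a (by omega) heq.symm⟩
  set N := Nat.find hper with hNdef
  have hN : 0 < N ∧ F^[N] (v0,v1) = (v0,v1) := Nat.find_spec hper
  haveI : NeZero N := ⟨by omega⟩
  have gper : ∀ n, g (n + N) = g n := by
    intro n
    rw [hg]
    simp only
    rw [Function.iterate_add_apply, hN.2]
  have gmul : ∀ n k, g (n + N*k) = g n := by
    intro n k
    induction k with
    | zero => rfl
    | succ k ih => rw [Nat.mul_succ, ← Nat.add_assoc, gper, ih]
  have gmod : ∀ n, g (n % N) = g n := by
    intro n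
    have h := gmul (n % N) (n / N)
    rw [Nat.mod_add_div] at h
    exact h.symm
  have hdist : ∀ a b, a < b → b < N → F^[a] (v0,v1) ≠ F^[b] (v0,v1) := by
    intro a b hab hbN h
    have := hcancel a b (by omega) h
    exact Nat.find_min hper (show b - a < N by omega) ⟨by omega, this⟩
  have noflip : ∀ a, g (a+1) ≠ g (a+N-1) := by
    intro a hflip
    refine collapse N (a+N) (by omega) ?_ ?_
    · exact (gper (a+N)).symm
    · rw [show a+N+1 = (a+1)+N by omega, gper, show a+N+N-1 = (a+N-1)+N by omega, gper]
      exact hflip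
  -- key adjacencies at an arbitrary point of the trajectory
  have hbN : ∀ a, G.Adj (g a) (g (a+N-1)) := by
    intro a
    have := hadj (a+N-1)
    rw [show a+N-1+1 = a+N by omega, gper] at this
    exact this.symm
  have hginj : ∀ a b, a < b → b < N → g a = g b → False := by
    intro a b hab hbN' heq
    have hbb : G.Adj (g a) (g (b+1)) := by
      have := (hadj b).symm
      rw [heq.symm] at this
      exact this.symm
    by_cases hc1 : g (b+1) = g (a+1)
    · refine hdist a b hab hbN' ?_
      have ha' : (F^[a] (v0,v1)) = (g a, g (a+1)) := by rw [← hgsnd a]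
      have hb' : (F^[b] (v0,v1)) = (g b, g (b+1)) := by rw [← hgsnd b]
      rw [ha', hb', heq, hc1]
    · have hrev : g (b+1) = g (a+N-1) :=
        two_nbrs (hdeg' a) (hadj a) hbb (hbN a) hc1 (noflip a).symm
      refine collapse (a+N-b) b (by omega) ?_ ?_
      · rw [show b + (a+N-b) = a+N by omega, gper]; exact heq.symm
      · rw [show b + (a+N-b) - 1 = a+N-1 by omega]; exact hrev
  set f : ZMod N → V := fun i => g i.val with hf
  have hfinj : Function.Injective f := by
    intro i j h
    rcases lt_trichotomy i.val j.val with hlt | heq | hgt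
    · exact absurd h (fun h' => hginj i.val j.val hlt (ZMod.val_lt j) h')
    · exact ZMod.val_injective N heq
    · exact absurd h (fun h' => hginj j.val i.val hgt (ZMod.val_lt i) h'.symm)
  have hgr : ∀ n, g n ∈ Set.range f := by
    intro n
    refine ⟨(n : ZMod N), ?_⟩
    rw [hf]
    simp only
    rw [ZMod.val_natCast, gmod]
  have hrange : Set.range f = S := by
    have hsub1 : Set.range f ⊆ S := by
      rintro x ⟨i, rfl⟩
      exact hmemg i.val
    have hsub : S ⊆ Set.range f := by
      intro v hv
      refine reach_closed (P := fun x => x ∈ Set.range f) ?_ v0 v (hconn v0 hv0 v hv) (hgr 0)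
      rintro x y ⟨i, rfl⟩ hxy
      have hnb : G.neighborSet (f i) = {g (i.val+1), g (i.val+N-1)} := by
        refine nbr_pair (hdeg' i.val) (hadj i.val) (hbN i.val) (noflip i.val)
      have : y ∈ G.neighborSet (f i) := hxy
      rw [hnb] at this
      rcases this with rfl | hy2
      · exact hgr _
      · rw [hy2]; exact hgr _
    exact Set.eq_of_subset_of_ncard_le hsub1 (Set.ncard_le_ncard hsub (Set.toFinite _))
      (Set.toFinite _)
  have hNcard : S.ncard = N := by
    rw [← hrange, ← Nat.card_coe_set_eq, Nat.card_range_of_injective hfinj, Nat.card_zmod]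
  have hN3 : 3 ≤ N := by omega
  haveI : Fact (1 < N) := ⟨by omega⟩
  have hfval : ∀ i : ZMod N, f (i+1) = g (i.val + 1) := by
    intro i
    rw [hf]
    simp only
    rw [ZMod.val_add, ZMod.val_one, gmod]
  have hone : (1 : ZMod N) ≠ 0 := one_ne_zero
  have htwo : (2 : ZMod N) ≠ 0 := by
    intro h
    rw [show (2 : ZMod N) = ((2:ℕ) : ZMod N) by push_cast; ring] at h
    rw [ZMod.natCast_eq_zero_iff] at h
    have := Nat.le_of_dvd (by omega) h
    omega
  have hle : cycOn f ≤ G := by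
    intro x y hxy
    rw [cycOn, SimpleGraph.fromEdgeSet_adj] at hxy
    obtain ⟨⟨i, he⟩, hne⟩ := hxy
    rw [Sym2.eq_iff] at he
    rcases he with ⟨rfl, rfl⟩ | ⟨rfl, rfl⟩
    · rw [hfval]; exact hadj i.val
    · rw [hfval]; exact (hadj i.val).symm
  have hcycadj : ∀ i : ZMod N, (cycOn f).Adj (f i) (f (i+1)) := by
    intro i
    rw [cycOn, SimpleGraph.fromEdgeSet_adj]
    refine ⟨⟨i, rfl⟩, ?_⟩
    intro h
    exact hone (by simpa using (hfinj h).symm)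
  have hGeq : G = cycOn f := by
    have hnbr : ∀ v, G.neighborSet v = (cycOn f).neighborSet v := by
      intro v
      by_cases hv : v ∈ S
      · obtain ⟨i, rfl⟩ : v ∈ Set.range f := by rw [hrange]; exact hv
        have hpairsub : ({f (i+1), f (i-1)} : Set V) ⊆ (cycOn f).neighborSet (f i) := by
          intro z hz
          rcases hz with rfl | hz
          · exact hcycadj i
          · rcases hz with rfl
            have := hcycadj (i-1)
            rw [sub_add_cancel] at this
            exact this.symm
        have hpairne : f (i+1) ≠ f (i-1) := by
          intro h
          have := hfinj h
          have h2 : (2 : ZMod N) = 0 := by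
            have : i + 1 - (i - 1) = 2 := by ring
            rw [← this]
            rw [hfinj h]
            ring
          exact htwo h2
        have hsub : (cycOn f).neighborSet (f i) ⊆ G.neighborSet (f i) := fun z hz => hle hz
        refine (Set.eq_of_subset_of_ncard_le hsub ?_ (Set.toFinite _)).symm
        have h2le : 2 ≤ ((cycOn f).neighborSet (f i)).ncard := by
          have := Set.ncard_le_ncard hpairsub (Set.toFinite _)
          rwa [Set.ncard_pair hpairne] at this
        have : (G.neighborSet (f i)).ncard = 2 := hdeg _ hv
        omega
      · rw [hsupp v hv]
        symm
        rw [Set.eq_empty_iff_forall_notMem]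
        intro z hz
        have : z ∈ G.neighborSet v := hle hz
        rw [hsupp v hv] at this
        exact this
    ext x y
    rw [← SimpleGraph.mem_neighborSet, ← SimpleGraph.mem_neighborSet, hnbr x]
  exact ⟨N, f, hN3, hfinj, hrange, hGeq⟩

end TwoRegular

section MatchSplit

variable {V : Type*} [Finite V]

lemma altNbr {N : ℕ} [NeZero N] {f : ZMod N → V} (hfinj : Function.Injective f)
    (hone : (1 : ZMod N) ≠ 0) (p : ZMod N → Prop) [DecidablePred p]
    (hp : ∀ i, p (i+1) ↔ ¬ p i) (j : ZMod N) :
    (SimpleGraph.fromEdgeSet {e | ∃ i, p i ∧ e = s(f i, f (i+1))}).neighborSet (f j) =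
      if p j then {f (j+1)} else {f (j-1)} := by
  classical
  have hne1 : f j ≠ f (j+1) := by
    intro h
    exact hone (by linear_combination - (hfinj h))
  have hne2 : f j ≠ f (j-1) := by
    intro h
    exact hone (by linear_combination (hfinj h))
  ext z
  simp only [SimpleGraph.mem_neighborSet, SimpleGraph.fromEdgeSet_adj, Set.mem_setOf_eq]
  constructor
  · rintro ⟨⟨i, hpi, he⟩, hne⟩
    rw [Sym2.eq_iff] at he
    rcases he with ⟨h1, h2⟩ | ⟨h1, h2⟩
    · have hij : i = j := hfinj h1.symm
      subst hij
      rw [if_pos hpi, h2]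
      rfl
    · have hij : j = i + 1 := hfinj h1
      have hpj : ¬ p j := by rw [hij, hp]; exact fun h => h hpi
      rw [if_neg hpj, h2]
      have : i = j - 1 := by rw [hij]; ring
      rw [this]
      rfl
  · intro hz
    by_cases hpj : p j
    · rw [if_pos hpj] at hz
      rcases hz with rfl
      exact ⟨⟨j, hpj, rfl⟩, hne1⟩
    · rw [if_neg hpj] at hz
      rcases hz with rfl
      have hpj1 : p (j-1) := by
        have := hp (j-1)
        rw [show j - 1 + 1 = j by ring] at this
        tauto
      refine ⟨⟨j - 1, hpj1, ?_⟩, hne2⟩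
      rw [show j - 1 + 1 = j by ring, Sym2.eq_swap]

lemma altNbrEmpty {N : ℕ} {f : ZMod N → V} (p : ZMod N → Prop) {v : V}
    (hv : v ∉ Set.range f) :
    (SimpleGraph.fromEdgeSet {e | ∃ i, p i ∧ e = s(f i, f (i+1))}).neighborSet v = ∅ := by
  ext z
  simp only [SimpleGraph.mem_neighborSet, SimpleGraph.fromEdgeSet_adj, Set.mem_setOf_eq,
    Set.mem_empty_iff_false, iff_false]
  rintro ⟨⟨i, hpi, he⟩, hne⟩
  rw [Sym2.eq_iff] at he
  rcases he with ⟨h1, h2⟩ | ⟨h1, h2⟩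
  · exact hv ⟨i, h1.symm⟩
  · exact hv ⟨i+1, h1.symm⟩

lemma matchSplit {N : ℕ} {f : ZMod N → V} (hN : 3 ≤ N) (hNe : Even N)
    (hfinj : Function.Injective f) :
    ∃ M1 M2 : SimpleGraph V, M1 ⊔ M2 = cycOn f ∧ Disjoint M1.edgeSet M2.edgeSet ∧
      M1 ≤ cycOn f ∧ M2 ≤ cycOn f ∧
      (∀ v ∈ Set.range f, degS M1 v = 1) ∧ (∀ v ∈ Set.range f, degS M2 v = 1) ∧
      (∀ v, v ∉ Set.range f → M1.neighborSet v = ∅) ∧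
      (∀ v, v ∉ Set.range f → M2.neighborSet v = ∅) := by
  classical
  haveI : NeZero N := ⟨by omega⟩
  haveI : Fact (1 < N) := ⟨by omega⟩
  have hone : (1 : ZMod N) ≠ 0 := one_ne_zero
  have htwo : (2 : ZMod N) ≠ 0 := by
    intro h
    rw [show (2 : ZMod N) = ((2:ℕ) : ZMod N) by push_cast; ring,
      ZMod.natCast_eq_zero_iff] at h
    have := Nat.le_of_dvd (by omega) h
    omega
  have hflip : ∀ i : ZMod N, Even ((i+1).val) ↔ ¬ Even (i.val) := by
    intro i
    have hv : (i+1).val = (i.val + 1) % N := by rw [ZMod.val_add, ZMod.val_one]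
    have hlt : i.val < N := ZMod.val_lt i
    obtain ⟨half, hhalf⟩ := hNe
    rw [hv, Nat.even_iff, Nat.even_iff]
    rcases Nat.lt_or_ge (i.val + 1) N with h | h
    · rw [Nat.mod_eq_of_lt h]; omega
    · have : i.val + 1 = N := by omega
      rw [this, Nat.mod_self]; omega
  have hflip' : ∀ i : ZMod N, ¬ Even ((i+1).val) ↔ ¬ ¬ Even (i.val) := by
    intro i
    rw [hflip i]
  refine ⟨SimpleGraph.fromEdgeSet {e | ∃ i, Even i.val ∧ e = s(f i, f (i+1))},
    SimpleGraph.fromEdgeSet {e | ∃ i, ¬ Even i.val ∧ e = s(f i, f (i+1))},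
    ?_, ?_, ?_, ?_, ?_, ?_, ?_, ?_⟩
  · rw [← SimpleGraph.fromEdgeSet_union, cycOn]
    congr 1
    ext e
    simp only [Set.mem_union, Set.mem_setOf_eq]
    constructor
    · rintro (⟨i, _, he⟩ | ⟨i, _, he⟩) <;> exact ⟨i, he⟩
    · rintro ⟨i, he⟩
      by_cases h : Even i.val
      · exact Or.inl ⟨i, h, he⟩
      · exact Or.inr ⟨i, h, he⟩
  · rw [Set.disjoint_left]
    intro e he1 he2
    rw [SimpleGraph.edgeSet_fromEdgeSet] at he1 he2
    obtain ⟨⟨i, hpi, rfl⟩, -⟩ := he1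
    obtain ⟨⟨i', hpi', he⟩, -⟩ := he2
    rw [Sym2.eq_iff] at he
    rcases he with ⟨h1, h2⟩ | ⟨h1, h2⟩
    · exact hpi' (hfinj h1 ▸ hpi)
    · have e1 : i = i' + 1 := hfinj h1
      have e2 : i + 1 = i' := hfinj h2
      exact htwo (by linear_combination e2 - e1)
  · intro x y h
    rw [SimpleGraph.fromEdgeSet_adj] at h
    rw [cycOn, SimpleGraph.fromEdgeSet_adj]
    obtain ⟨⟨i, _, he⟩, hne⟩ := h
    exact ⟨⟨i, he⟩, hne⟩
  · intro x y h
    rw [SimpleGraph.fromEdgeSet_adj] at h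
    rw [cycOn, SimpleGraph.fromEdgeSet_adj]
    obtain ⟨⟨i, _, he⟩, hne⟩ := h
    exact ⟨⟨i, he⟩, hne⟩
  · rintro v ⟨j, rfl⟩
    rw [degS, altNbr hfinj hone _ hflip j]
    split_ifs <;> exact Set.ncard_singleton _
  · rintro v ⟨j, rfl⟩
    rw [degS, altNbr hfinj hone (fun i => ¬ Even i.val) hflip' j]
    split_ifs <;> exact Set.ncard_singleton _
  · intro v hv
    exact altNbrEmpty _ hv
  · intro v hv
    exact altNbrEmpty _ hv

end MatchSplit

/-- restriction of a graph to a vertex set -/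
def restr {V : Type*} (G : SimpleGraph V) (S : Set V) : SimpleGraph V where
  Adj x y := G.Adj x y ∧ x ∈ S ∧ y ∈ S
  symm := ⟨fun x y h => ⟨h.1.symm, h.2.2, h.2.1⟩⟩
  loopless := ⟨fun x h => G.loopless.irrefl x h.1⟩

section CycNbr

variable {V : Type*}

lemma cycOn_adj_mem {N : ℕ} {f : ZMod N → V} {x y : V} (h : (cycOn f).Adj x y) :
    x ∈ Set.range f ∧ y ∈ Set.range f := by
  rw [cycOn, SimpleGraph.fromEdgeSet_adj] at h
  obtain ⟨⟨i, he⟩, -⟩ := h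
  rw [Sym2.eq_iff] at he
  rcases he with ⟨rfl, rfl⟩ | ⟨rfl, rfl⟩
  · exact ⟨⟨i, rfl⟩, ⟨i+1, rfl⟩⟩
  · exact ⟨⟨i+1, rfl⟩, ⟨i, rfl⟩⟩

lemma zmod_one_ne_zero {N : ℕ} (hN : 3 ≤ N) : (1 : ZMod N) ≠ 0 := by
  haveI : Fact (1 < N) := ⟨by omega⟩
  exact one_ne_zero

lemma zmod_two_ne_zero {N : ℕ} (hN : 3 ≤ N) : (2 : ZMod N) ≠ 0 := by
  intro h
  rw [show (2 : ZMod N) = ((2:ℕ) : ZMod N) by push_cast; ring,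
    ZMod.natCast_eq_zero_iff] at h
  have := Nat.le_of_dvd (by omega) h
  omega

lemma cycOn_nbr {N : ℕ} {f : ZMod N → V} (hN : 3 ≤ N) (hfinj : Function.Injective f)
    (i : ZMod N) : (cycOn f).neighborSet (f i) = {f (i+1), f (i-1)} := by
  have hone := zmod_one_ne_zero hN
  ext z
  simp only [SimpleGraph.mem_neighborSet, cycOn, SimpleGraph.fromEdgeSet_adj, Set.mem_setOf_eq,
    Set.mem_insert_iff, Set.mem_singleton_iff]
  constructor
  · rintro ⟨⟨j, he⟩, hne⟩
    rw [Sym2.eq_iff] at he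
    rcases he with ⟨h1, h2⟩ | ⟨h1, h2⟩
    · have : j = i := hfinj h1.symm
      subst this
      exact Or.inl h2
    · have hj : i = j + 1 := hfinj h1
      have : j = i - 1 := by rw [hj]; ring
      subst this
      exact Or.inr h2
  · rintro (rfl | rfl)
    · refine ⟨⟨i, rfl⟩, ?_⟩
      intro h
      exact hone (by linear_combination - (hfinj h))
    · refine ⟨⟨i-1, by rw [show i - 1 + 1 = i by ring, Sym2.eq_swap]⟩, ?_⟩
      intro h
      exact hone (by linear_combination (hfinj h))

lemma cycOn_pair_ne {N : ℕ} {f : ZMod N → V} (hN : 3 ≤ N) (hfinj : Function.Injective f)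
    (i : ZMod N) : f (i+1) ≠ f (i-1) := by
  intro h
  exact zmod_two_ne_zero hN (by linear_combination (hfinj h))

end CycNbr

section SideHam

variable {V : Type*} [Finite V]

lemma sideHam {A A₀ B B₀ : Set V} {J JA CB JB : SimpleGraph V}
    (hpart : ∀ v : V, v ∈ A ∨ v ∈ A₀ ∨ v ∈ B ∨ v ∈ B₀)
    (hd1 : Disjoint A A₀)
    (hdAB : Disjoint (A₀ ∪ A) (B₀ ∪ B))
    (hac : J.IsAcyclic) (hdeg2 : ∀ v, degS J v ≤ 2)
    (hEC2a : ∀ v ∈ A₀ ∪ B₀, degS J v = 2)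
    (hEC2b : ∀ v, v ∉ A₀ ∪ B₀ → degS J v ≤ 1)
    (hEC3A : ∀ x y, J.Adj x y → ¬(x ∈ A ∧ y ∈ A))
    (hMES : ∀ x y, J.Adj x y → x ∈ A₀ ∪ A → y ∈ A₀ ∪ A)
    (hJA : JA = SimpleGraph.fromEdgeSet
      {e | ∃ u v, e = s(u, v) ∧ (starAB J).Adj u v ∧ u ∈ A ∧ v ∈ A})
    {NA : ℕ} {fA : ZMod NA → V} (hNA : 3 ≤ NA) (hfAinj : Function.Injective fA)
    (hfA : Set.range fA = A) (hconsA : JA ≤ cycOn fA)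
    (hCB : ∀ x y, CB.Adj x y → x ∈ B ∧ y ∈ B)
    (hJBm : ∀ x y, JB.Adj x y → x ∈ B ∧ y ∈ B) :
    IsHamCycleOn (restr (((cycOn fA ⊔ CB) \ (JA ⊔ JB)) ⊔ J) (A₀ ∪ A)) (A₀ ∪ A) := by
  classical
  set S : Set V := A₀ ∪ A with hS
  set G : SimpleGraph V := ((cycOn fA ⊔ CB) \ (JA ⊔ JB)) ⊔ J with hG
  set H : SimpleGraph V := restr G S with hH
  have hAS : A ⊆ S := Set.subset_union_right
  have hA0S : A₀ ⊆ S := Set.subset_union_left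
  have hSB : ∀ {x : V}, x ∈ S → x ∉ B₀ ∪ B := fun hx hB => Set.disjoint_left.mp hdAB hx hB
  have hAnB : ∀ {x : V}, x ∈ A → x ∉ B := fun hx hB => hSB (hAS hx) (Or.inr hB)
  have hAnA0 : ∀ {x : V}, x ∈ A → x ∉ A₀ := fun hx h0 => Set.disjoint_left.mp hd1 hx h0
  have hA0nB : ∀ {x : V}, x ∈ A₀ → x ∉ B := fun hx hB => hSB (hA0S hx) (Or.inr hB)
  have hCAmem : ∀ {x y : V}, (cycOn fA).Adj x y → x ∈ A ∧ y ∈ A := by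
    intro x y h
    have := cycOn_adj_mem h
    rw [hfA] at this
    exact this
  have hstarAdj : ∀ {x y : V}, (starAB J).Adj x y ↔
      (x ≠ y ∧ degS J x = 1 ∧ degS J y = 1 ∧ J.Reachable x y) := fun {x y} => Iff.rfl
  have hJAadj : ∀ {x y : V}, JA.Adj x y ↔ ((starAB J).Adj x y ∧ x ∈ A ∧ y ∈ A) := by
    intro x y
    rw [hJA, SimpleGraph.fromEdgeSet_adj]
    constructor
    · rintro ⟨⟨u, w, he, hst, hu, hw⟩, hne⟩
      rw [Sym2.eq_iff] at he
      rcases he with ⟨rfl, rfl⟩ | ⟨rfl, rfl⟩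
      · exact ⟨hst, hu, hw⟩
      · exact ⟨hst.symm, hw, hu⟩
    · rintro ⟨hst, hx, hy⟩
      exact ⟨⟨x, y, rfl, hst, hx, hy⟩, hst.1⟩
  -- J-edges from S stay in S and give H-edges
  have hHedge : ∀ x y, x ∈ S → J.Adj x y → H.Adj x y := by
    intro x y hx hxy
    exact ⟨Or.inr hxy, hx, hMES x y hxy hx⟩
  have hc1 : ∀ x y, J.Reachable x y → x ∈ S → H.Reachable x y :=
    fun x y hr hx => reach_map (P := fun z => z ∈ S) (fun a b ha hab => hMES a b hab ha)
      (fun a b ha hab => hHedge a b ha hab) x y hr hx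
  have hSclosed : ∀ x y, J.Reachable x y → x ∈ S → y ∈ S :=
    fun x y hr hx => reach_closed (P := fun z => z ∈ S) (fun a b ha hab => hMES a b hab ha) x y hr hx
  -- a leaf reachable from an S-vertex lies in A
  have hleafA : ∀ {x w : V}, x ∈ S → J.Reachable x w → degS J w = 1 → w ∈ A := by
    intro x w hx hr hw
    have hwS : w ∈ S := hSclosed x w hr hx
    have hwnot : w ∉ A₀ ∪ B₀ := by
      intro hmem
      have := hEC2a w hmem
      omega
    rcases hwS with hw0 | hwA
    · exact absurd (Or.inl hw0) hwnot
    · exact hwA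
  -- degree-two property inside S
  have hone := zmod_one_ne_zero hNA
  haveI : NeZero NA := ⟨by omega⟩
  have hdegH : ∀ v ∈ S, degS H v = 2 := by
    intro v hv
    rcases hv with hv0 | hvA
    · -- v ∈ A₀ : H-neighbours are exactly J-neighbours
      have hnbr : H.neighborSet v = J.neighborSet v := by
        ext y
        simp only [SimpleGraph.mem_neighborSet]
        constructor
        · rintro ⟨hGadj, -, -⟩
          rcases hGadj with ⟨hor, -⟩ | hJ
          · rcases hor with hCA | hCBe
            · exact absurd (hCAmem hCA).1 (fun h => hAnA0 h hv0)
            · exact absurd (hCB _ _ hCBe).1 (hA0nB hv0)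
          · exact hJ
        · intro hJ
          exact ⟨Or.inr hJ, hA0S hv0, hMES _ _ hJ (hA0S hv0)⟩
      rw [degS, hnbr, ← degS]
      exact hEC2a v (Or.inl hv0)
    · -- v ∈ A
      obtain ⟨i, rfl⟩ : v ∈ Set.range fA := by rw [hfA]; exact hvA
      set v := fA i with hv
      have hvB : v ∉ B := hAnB hvA
      have hCBv : ∀ y, ¬ CB.Adj v y := fun y h => hvB (hCB _ _ h).1
      have hJBv : ∀ y, ¬ JB.Adj v y := fun y h => hvB (hJBm _ _ h).1
      have hnbr : H.neighborSet v =
          ((cycOn fA).neighborSet v \ JA.neighborSet v) ∪ J.neighborSet v := by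
        ext y
        simp only [SimpleGraph.mem_neighborSet, Set.mem_union, Set.mem_diff]
        constructor
        · rintro ⟨hGadj, -, -⟩
          rcases hGadj with ⟨hor, hnor⟩ | hJ
          · rcases hor with hCA | hCBe
            · exact Or.inl ⟨hCA, fun h => hnor (Or.inl h)⟩
            · exact absurd hCBe (hCBv y)
          · exact Or.inr hJ
        · rintro (⟨hCA, hnJA⟩ | hJ)
          · refine ⟨Or.inl ⟨Or.inl hCA, ?_⟩, hAS hvA, hAS (hCAmem hCA).2⟩
            rintro (h | h)
            · exact hnJA h
            · exact hJBv y h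
          · exact ⟨Or.inr hJ, hAS hvA, hMES _ _ hJ (hAS hvA)⟩
      have hCAnbr : (cycOn fA).neighborSet v = {fA (i+1), fA (i-1)} :=
        cycOn_nbr hNA hfAinj i
      have hvnot : v ∉ A₀ ∪ B₀ := by
        rintro (h | h)
        · exact hAnA0 hvA h
        · exact hSB (hAS hvA) (Or.inl h)
      have hd01 : degS J v ≤ 1 := hEC2b v hvnot
      rcases Nat.le_one_iff_eq_zero_or_eq_one.mp hd01 with h0 | h1
      · -- no J-edge at v
        have hJnbr : J.neighborSet v = ∅ := nbr_empty_of_degS_zero h0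
        have hJAnbr : JA.neighborSet v = ∅ := by
          ext y
          simp only [SimpleGraph.mem_neighborSet, Set.mem_empty_iff_false, iff_false]
          intro h
          have := (hJAadj.mp h).1.2.1
          omega
        rw [degS, hnbr, hJnbr, hJAnbr, hCAnbr]
        rw [Set.diff_empty, Set.union_empty]
        exact Set.ncard_pair (cycOn_pair_ne hNA hfAinj i)
      · -- one J-edge at v
        obtain ⟨u, hu⟩ : ∃ u, J.neighborSet v = {u} := Set.ncard_eq_one.mp h1
        have hJvu : J.Adj v u := by
          have : u ∈ J.neighborSet v := by rw [hu]; rfl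
          exact this
        have huA0 : u ∈ A₀ := by
          have huS : u ∈ S := hMES _ _ hJvu (hAS hvA)
          rcases huS with h | h
          · exact h
          · exact absurd ⟨hvA, h⟩ (hEC3A _ _ hJvu)
        obtain ⟨w, hw1, hwreach, hwuniq⟩ := leafReach hac hdeg2 hJvu
        obtain ⟨hwv, huniq⟩ := hwuniq h1
        have hwA : w ∈ A := hleafA (hAS hvA) hwreach hw1
        have hstar : (starAB J).Adj v w := ⟨hwv.symm, h1, hw1, hwreach⟩
        have hJAvw : JA.Adj v w := hJAadj.mpr ⟨hstar, hvA, hwA⟩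
        have hJAnbr : JA.neighborSet v = {w} := by
          ext y
          simp only [SimpleGraph.mem_neighborSet, Set.mem_singleton_iff]
          constructor
          · intro h
            obtain ⟨hst, -, hyA⟩ := hJAadj.mp h
            exact huniq y hst.2.2.1 hst.1.symm hst.2.2.2
          · rintro rfl
            exact hJAvw
        have hwpair : w ∈ ({fA (i+1), fA (i-1)} : Set V) := by
          rw [← hCAnbr]
          exact hconsA hJAvw
        have hJnbru : J.neighborSet v = {u} := hu
        have hpairne := cycOn_pair_ne hNA hfAinj i
        have huother : ∀ z ∈ ({fA (i+1), fA (i-1)} : Set V), u ≠ z := by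
          rintro z hz h
          subst h
          rcases hz with rfl | hz
          · exact hAnA0 (by rw [← hfA]; exact ⟨i+1, rfl⟩) huA0
          · rcases hz with rfl
            exact hAnA0 (by rw [← hfA]; exact ⟨i-1, rfl⟩) huA0
        rw [degS, hnbr, hJnbru, hJAnbr, hCAnbr]
        rcases hwpair with hw | hw
        · rw [← hw]
          have hset : ({w, fA (i-1)} : Set V) \ {w} ∪ {u} = {fA (i-1), u} := by
            ext z
            simp only [Set.mem_union, Set.mem_diff, Set.mem_insert_iff, Set.mem_singleton_iff]
            constructor
            · rintro (⟨rfl | rfl, hz2⟩ | rfl)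
              · exact absurd rfl hz2
              · exact Or.inl rfl
              · exact Or.inr rfl
            · rintro (rfl | rfl)
              · refine Or.inl ⟨Or.inr rfl, ?_⟩
                rw [hw]
                exact (cycOn_pair_ne hNA hfAinj i).symm
              · exact Or.inr rfl
          rw [hset]
          refine Set.ncard_pair ?_
          exact fun h => huother _ (Or.inr rfl) h.symm
        · rcases hw with hw
          rw [← hw]
          have hset : ({fA (i+1), w} : Set V) \ {w} ∪ {u} = {fA (i+1), u} := by
            ext z
            simp only [Set.mem_union, Set.mem_diff, Set.mem_insert_iff, Set.mem_singleton_iff]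
            constructor
            · rintro (⟨rfl | rfl, hz2⟩ | rfl)
              · exact Or.inl rfl
              · exact absurd rfl hz2
              · exact Or.inr rfl
            · rintro (rfl | rfl)
              · refine Or.inl ⟨Or.inl rfl, ?_⟩
                rw [hw]
                exact cycOn_pair_ne hNA hfAinj i
              · exact Or.inr rfl
          rw [hset]
          refine Set.ncard_pair ?_
          exact fun h => huother _ (Or.inl rfl) h.symm
  -- no H-edges outside S
  have hsuppH : ∀ v, v ∉ S → H.neighborSet v = ∅ := by
    intro v hv
    ext y
    simp only [SimpleGraph.mem_neighborSet, Set.mem_empty_iff_false, iff_false]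
    rintro ⟨-, hvS, -⟩
    exact hv hvS
  -- connectivity of H on S
  have hc2 : ∀ v ∈ A₀, ∃ a ∈ A, H.Reachable v a := by
    intro v hv0
    have h2 : degS J v = 2 := hEC2a v (Or.inl hv0)
    obtain ⟨u, hu⟩ : (J.neighborSet v).Nonempty := by
      rw [← Set.ncard_pos (Set.toFinite _), ← degS, h2]; omega
    obtain ⟨w, hw1, hwreach, -⟩ := leafReach hac hdeg2 (hu : J.Adj v u)
    exact ⟨w, hleafA (hA0S hv0) hwreach hw1, hc1 v w hwreach (hA0S hv0)⟩
  have hc3 : ∀ i : ZMod NA, H.Reachable (fA i) (fA (i+1)) := by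
    intro i
    have hiA : fA i ∈ A := by rw [← hfA]; exact ⟨i, rfl⟩
    have hi1A : fA (i+1) ∈ A := by rw [← hfA]; exact ⟨i+1, rfl⟩
    by_cases hJAe : JA.Adj (fA i) (fA (i+1))
    · obtain ⟨hst, -, -⟩ := hJAadj.mp hJAe
      exact hc1 _ _ hst.2.2.2 (hAS hiA)
    · have hCAadj : (cycOn fA).Adj (fA i) (fA (i+1)) := by
        rw [cycOn, SimpleGraph.fromEdgeSet_adj]
        refine ⟨⟨i, rfl⟩, fun h => hone (by linear_combination - (hfAinj h))⟩
      refine SimpleGraph.Adj.reachable ?_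
      refine ⟨Or.inl ⟨Or.inl hCAadj, ?_⟩, hAS hiA, hAS hi1A⟩
      rintro (h | h)
      · exact hJAe h
      · exact hAnB hiA (hJBm _ _ h).1
  have hc4 : ∀ i j : ZMod NA, H.Reachable (fA i) (fA j) := by
    have hstep : ∀ (k : ℕ) (i : ZMod NA), H.Reachable (fA i) (fA (i + (k : ZMod NA))) := by
      intro k
      induction k with
      | zero =>
        intro i
        rw [Nat.cast_zero, add_zero]
      | succ k ih =>
        intro i
        refine (ih i).trans ?_
        rw [show ((k+1 : ℕ) : ZMod NA) = ((k:ℕ) : ZMod NA) + 1 by push_cast; ring, ← add_assoc]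
        exact hc3 (i + (k : ZMod NA))
    intro i j
    have := hstep (j - i).val i
    rw [ZMod.natCast_rightInverse (j - i)] at this
    rw [show i + (j - i) = j by ring] at this
    exact this
  have hconnH : ∀ u ∈ S, ∀ v ∈ S, H.Reachable u v := by
    have hAreach : ∀ x ∈ S, ∃ a ∈ A, H.Reachable x a := by
      intro x hx
      rcases hx with hx0 | hxA
      · exact hc2 x hx0
      · exact ⟨x, hxA, SimpleGraph.Reachable.refl x⟩
    intro u hu v hv
    obtain ⟨a, haA, hra⟩ := hAreach u hu
    obtain ⟨b, hbA, hrb⟩ := hAreach v hv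
    obtain ⟨i, rfl⟩ : a ∈ Set.range fA := by rw [hfA]; exact haA
    obtain ⟨j, rfl⟩ : b ∈ Set.range fA := by rw [hfA]; exact hbA
    exact hra.trans ((hc4 i j).trans hrb.symm)
  have hcardS : 3 ≤ S.ncard := by
    have h1 : Set.ncard A ≤ S.ncard := Set.ncard_le_ncard hAS (Set.toFinite _)
    have h2 : Set.ncard A = NA := by
      rw [← hfA, ← Nat.card_coe_set_eq, Nat.card_range_of_injective hfAinj, Nat.card_zmod]
    omega
  exact hamOfTwoRegular hdegH hsuppH hconnH hcardS

end SideHam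

section Assembly

lemma neighborSet_sup' {V : Type*} (G H : SimpleGraph V) (v : V) :
    (G ⊔ H).neighborSet v = G.neighborSet v ∪ H.neighborSet v := by
  ext z
  simp [SimpleGraph.mem_neighborSet]

end Assembly


/-- Proposition 5.1(ii): if `J` is a matching exceptional system and `C_A`, `C_B` are Hamilton
cycles on `A`, `B` consistent with `J*_A`, `J*_B`, then `C_A + C_B - J* + J` is the union of
a Hamilton cycle on `A' = A₀ ∪ A` and one on `B' = B₀ ∪ B`; in particular if `|A'|`, `|B'|`
are even, it is the union of two edge-disjoint perfect matchings on `V`. -/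
theorem stmt8 (V : Type*) [Fintype V] (A A₀ B B₀ : Set V) (J : SimpleGraph V)
    (hpart : A ∪ A₀ ∪ B ∪ B₀ = Set.univ)
    (hd1 : Disjoint A A₀) (hd2 : Disjoint A B) (hd3 : Disjoint A B₀)
    (hd4 : Disjoint A₀ B) (hd5 : Disjoint A₀ B₀) (hd6 : Disjoint B B₀)
    (hps : PathSystem J)
    (hEC2a : ∀ v ∈ A₀ ∪ B₀, degS J v = 2)
    (hEC2b : ∀ v, v ∉ A₀ ∪ B₀ → degS J v ≤ 1)
    (hEC3 : ∀ x y, J.Adj x y → ¬(x ∈ A ∧ y ∈ A) ∧ ¬(x ∈ B ∧ y ∈ B))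
    -- (MES): `J` has no edges between `A' = A₀ ∪ A` and `B' = B₀ ∪ B`
    (hMES : ∀ x y, J.Adj x y →
      ¬((x ∈ A₀ ∪ A ∧ y ∈ B₀ ∪ B) ∨ (y ∈ A₀ ∪ A ∧ x ∈ B₀ ∪ B)))
    -- the fictive edge graphs `J*_A := J*_{AB}[A]` and `J*_B := J*_{AB}[B]`
    (JA JB : SimpleGraph V)
    (hJA : JA = SimpleGraph.fromEdgeSet
      {e | ∃ u v, e = s(u, v) ∧ (starAB J).Adj u v ∧ u ∈ A ∧ v ∈ A})
    (hJB : JB = SimpleGraph.fromEdgeSet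
      {e | ∃ u v, e = s(u, v) ∧ (starAB J).Adj u v ∧ u ∈ B ∧ v ∈ B})
    -- the Hamilton cycles `C_A`, `C_B`, consistent with `J*_A`, `J*_B`
    (NA NB : ℕ) (fA : ZMod NA → V) (fB : ZMod NB → V)
    (hNA : 3 ≤ NA) (hNB : 3 ≤ NB)
    (hfAinj : Function.Injective fA) (hfBinj : Function.Injective fB)
    (hfA : Set.range fA = A) (hfB : Set.range fB = B)
    (hconsA : JA ≤ cycOn fA) (hconsB : JB ≤ cycOn fB) :
    (∃ H1 H2 : SimpleGraph V,
        ((cycOn fA ⊔ cycOn fB) \ (JA ⊔ JB)) ⊔ J = H1 ⊔ H2 ∧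
        Disjoint H1.edgeSet H2.edgeSet ∧
        IsHamCycleOn H1 (A₀ ∪ A) ∧ IsHamCycleOn H2 (B₀ ∪ B)) ∧
    (Even (A₀ ∪ A).ncard → Even (B₀ ∪ B).ncard →
      ∃ M1 M2 : SimpleGraph V,
        ((cycOn fA ⊔ cycOn fB) \ (JA ⊔ JB)) ⊔ J = M1 ⊔ M2 ∧
        Disjoint M1.edgeSet M2.edgeSet ∧
        (∀ v, degS M1 v = 1) ∧ (∀ v, degS M2 v = 1)) := by
  classical
  set G : SimpleGraph V := ((cycOn fA ⊔ cycOn fB) \ (JA ⊔ JB)) ⊔ J with hGdef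
  have hpart' : ∀ v : V, v ∈ A ∨ v ∈ A₀ ∨ v ∈ B ∨ v ∈ B₀ := by
    intro v
    have hv : v ∈ A ∪ A₀ ∪ B ∪ B₀ := by rw [hpart]; trivial
    simp only [Set.mem_union] at hv
    tauto
  obtain ⟨hac, hdeg2⟩ := hps
  have hMESA : ∀ x y, J.Adj x y → x ∈ A₀ ∪ A → y ∈ A₀ ∪ A := by
    intro x y h hx
    rcases hpart' y with hy | hy | hy | hy
    · exact Or.inr hy
    · exact Or.inl hy
    · exact absurd (Or.inl ⟨hx, Or.inr hy⟩) (hMES x y h)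
    · exact absurd (Or.inl ⟨hx, Or.inl hy⟩) (hMES x y h)
  have hMESB : ∀ x y, J.Adj x y → x ∈ B₀ ∪ B → y ∈ B₀ ∪ B := by
    intro x y h hx
    rcases hpart' y with hy | hy | hy | hy
    · exact absurd (Or.inr ⟨Or.inr hy, hx⟩) (hMES x y h)
    · exact absurd (Or.inr ⟨Or.inl hy, hx⟩) (hMES x y h)
    · exact Or.inr hy
    · exact Or.inl hy
  have hdA'B' : Disjoint (A₀ ∪ A) (B₀ ∪ B) := by
    rw [Set.disjoint_union_left, Set.disjoint_union_right, Set.disjoint_union_right]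
    exact ⟨⟨hd5, hd4⟩, ⟨hd3, hd2⟩⟩
  have hCAmem : ∀ x y : V, (cycOn fA).Adj x y → x ∈ A ∧ y ∈ A := by
    intro x y h
    have := cycOn_adj_mem h
    rwa [hfA] at this
  have hCBmem : ∀ x y : V, (cycOn fB).Adj x y → x ∈ B ∧ y ∈ B := by
    intro x y h
    have := cycOn_adj_mem h
    rwa [hfB] at this
  have hJAmem : ∀ x y : V, JA.Adj x y → x ∈ A ∧ y ∈ A := by
    intro x y h
    rw [hJA, SimpleGraph.fromEdgeSet_adj] at h
    obtain ⟨⟨u, w, he, -, hu, hw⟩, -⟩ := h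
    rw [Sym2.eq_iff] at he
    rcases he with ⟨rfl, rfl⟩ | ⟨rfl, rfl⟩
    · exact ⟨hu, hw⟩
    · exact ⟨hw, hu⟩
  have hJBmem : ∀ x y : V, JB.Adj x y → x ∈ B ∧ y ∈ B := by
    intro x y h
    rw [hJB, SimpleGraph.fromEdgeSet_adj] at h
    obtain ⟨⟨u, w, he, -, hu, hw⟩, -⟩ := h
    rw [Sym2.eq_iff] at he
    rcases he with ⟨rfl, rfl⟩ | ⟨rfl, rfl⟩
    · exact ⟨hu, hw⟩
    · exact ⟨hw, hu⟩
  -- the two Hamilton cycles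
  have Ham1 : IsHamCycleOn (restr G (A₀ ∪ A)) (A₀ ∪ A) := by
    exact sideHam hpart' hd1 hdA'B' hac hdeg2 hEC2a hEC2b
      (fun x y h => (hEC3 x y h).1) hMESA hJA hNA hfAinj hfA hconsA hCBmem hJBmem
  have Ham2 : IsHamCycleOn (restr G (B₀ ∪ B)) (B₀ ∪ B) := by
    have hpart'' : ∀ v : V, v ∈ B ∨ v ∈ B₀ ∨ v ∈ A ∨ v ∈ A₀ := by
      intro v; rcases hpart' v with h | h | h | h <;> tauto
    have hEC2a' : ∀ v ∈ B₀ ∪ A₀, degS J v = 2 := by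
      intro v hv
      refine hEC2a v ?_
      rcases hv with h | h
      · exact Or.inr h
      · exact Or.inl h
    have hEC2b' : ∀ v, v ∉ B₀ ∪ A₀ → degS J v ≤ 1 := by
      intro v hv
      refine hEC2b v ?_
      intro hmem
      rcases hmem with h | h
      · exact hv (Or.inr h)
      · exact hv (Or.inl h)
    have h2 := sideHam hpart'' hd6 hdA'B'.symm hac hdeg2 hEC2a' hEC2b'
      (fun x y h => (hEC3 x y h).2) hMESB hJB hNB hfBinj hfB hconsB hCAmem hJAmem
    have hGsym : ((cycOn fB ⊔ cycOn fA) \ (JB ⊔ JA)) ⊔ J = G := by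
      rw [hGdef, sup_comm (cycOn fB) (cycOn fA), sup_comm JB JA]
    rwa [hGsym] at h2
  set H1 : SimpleGraph V := restr G (A₀ ∪ A) with hH1
  set H2 : SimpleGraph V := restr G (B₀ ∪ B) with hH2
  have hsides : ∀ x y : V, G.Adj x y →
      (x ∈ A₀ ∪ A ∧ y ∈ A₀ ∪ A) ∨ (x ∈ B₀ ∪ B ∧ y ∈ B₀ ∪ B) := by
    intro x y h
    rcases h with ⟨hor, -⟩ | hJ
    · rcases hor with hCA | hCBe
      · have := hCAmem x y hCA
        exact Or.inl ⟨Or.inr this.1, Or.inr this.2⟩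
      · have := hCBmem x y hCBe
        exact Or.inr ⟨Or.inr this.1, Or.inr this.2⟩
    · rcases hpart' x with hx | hx | hx | hx
      · exact Or.inl ⟨Or.inr hx, hMESA x y hJ (Or.inr hx)⟩
      · exact Or.inl ⟨Or.inl hx, hMESA x y hJ (Or.inl hx)⟩
      · exact Or.inr ⟨Or.inr hx, hMESB x y hJ (Or.inr hx)⟩
      · exact Or.inr ⟨Or.inl hx, hMESB x y hJ (Or.inl hx)⟩
  have hsplit : G = H1 ⊔ H2 := by
    ext x y
    constructor
    · intro h
      rcases hsides x y h with ⟨hx, hy⟩ | ⟨hx, hy⟩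
      · exact Or.inl ⟨h, hx, hy⟩
      · exact Or.inr ⟨h, hx, hy⟩
    · rintro (⟨h, -, -⟩ | ⟨h, -, -⟩) <;> exact h
  have hdisj : Disjoint H1.edgeSet H2.edgeSet := by
    rw [Set.disjoint_left]
    intro e he1 he2
    induction e using Sym2.ind with
    | _ x y =>
      rw [SimpleGraph.mem_edgeSet] at he1 he2
      exact Set.disjoint_left.mp hdA'B' he1.2.1 he2.2.1
  refine ⟨⟨H1, H2, hsplit, hdisj, Ham1, Ham2⟩, ?_⟩
  intro hevA hevB
  obtain ⟨N1, f1, hN1, hf1inj, hf1range, hH1eq⟩ := Ham1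
  obtain ⟨N2, f2, hN2, hf2inj, hf2range, hH2eq⟩ := Ham2
  have hN1card : (A₀ ∪ A).ncard = N1 := by
    rw [← hf1range, ← Nat.card_coe_set_eq, Nat.card_range_of_injective hf1inj, Nat.card_zmod]
  have hN2card : (B₀ ∪ B).ncard = N2 := by
    rw [← hf2range, ← Nat.card_coe_set_eq, Nat.card_range_of_injective hf2inj, Nat.card_zmod]
  have hevN1 : Even N1 := hN1card ▸ hevA
  have hevN2 : Even N2 := hN2card ▸ hevB
  obtain ⟨M1a, M2a, heqa, hdisja, hlea1, hlea2, hdega1, hdega2, hempa1, hempa2⟩ :=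
    matchSplit hN1 hevN1 hf1inj
  obtain ⟨M1b, M2b, heqb, hdisjb, hleb1, hleb2, hdegb1, hdegb2, hempb1, hempb2⟩ :=
    matchSplit hN2 hevN2 hf2inj
  refine ⟨M1a ⊔ M1b, M2a ⊔ M2b, ?_, ?_, ?_, ?_⟩
  · -- the union is G
    have hshuffle : (M1a ⊔ M1b) ⊔ (M2a ⊔ M2b) = (M1a ⊔ M2a) ⊔ (M1b ⊔ M2b) := by
      ext x y
      simp only [SimpleGraph.sup_adj]
      tauto
    rw [hshuffle, heqa, heqb, ← hH1eq, ← hH2eq]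
    exact hsplit
  · -- edge-disjointness
    have hsub1a : M1a.edgeSet ⊆ H1.edgeSet := by
      rw [hH1eq]; exact SimpleGraph.edgeSet_mono hlea1
    have hsub2a : M2a.edgeSet ⊆ H1.edgeSet := by
      rw [hH1eq]; exact SimpleGraph.edgeSet_mono hlea2
    have hsub1b : M1b.edgeSet ⊆ H2.edgeSet := by
      rw [hH2eq]; exact SimpleGraph.edgeSet_mono hleb1
    have hsub2b : M2b.edgeSet ⊆ H2.edgeSet := by
      rw [hH2eq]; exact SimpleGraph.edgeSet_mono hleb2
    rw [SimpleGraph.edgeSet_sup, SimpleGraph.edgeSet_sup]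
    rw [Set.disjoint_union_left]
    constructor
    · rw [Set.disjoint_union_right]
      exact ⟨hdisja, Set.disjoint_of_subset hsub1a hsub2b hdisj⟩
    · rw [Set.disjoint_union_right]
      exact ⟨Set.disjoint_of_subset hsub1b hsub2a hdisj.symm, hdisjb⟩
  · -- M1 is a perfect matching
    intro v
    have hvmem : v ∈ (A₀ ∪ A) ∨ v ∈ (B₀ ∪ B) := by
      rcases hpart' v with h | h | h | h
      · exact Or.inl (Or.inr h)
      · exact Or.inl (Or.inl h)
      · exact Or.inr (Or.inr h)
      · exact Or.inr (Or.inl h)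
    rw [degS, neighborSet_sup']
    rcases hvmem with hv | hv
    · have h1 : v ∈ Set.range f1 := by rw [hf1range]; exact hv
      have h2 : v ∉ Set.range f2 := by
        rw [hf2range]; exact fun hb => Set.disjoint_left.mp hdA'B' hv hb
      rw [hempb1 v h2, Set.union_empty, ← degS]
      exact hdega1 v h1
    · have h2 : v ∈ Set.range f2 := by rw [hf2range]; exact hv
      have h1 : v ∉ Set.range f1 := by
        rw [hf1range]; exact fun hb => Set.disjoint_left.mp hdA'B' hb hv
      rw [hempa1 v h1, Set.empty_union, ← degS]
      exact hdegb1 v h2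
  · -- M2 is a perfect matching
    intro v
    have hvmem : v ∈ (A₀ ∪ A) ∨ v ∈ (B₀ ∪ B) := by
      rcases hpart' v with h | h | h | h
      · exact Or.inl (Or.inr h)
      · exact Or.inl (Or.inl h)
      · exact Or.inr (Or.inr h)
      · exact Or.inr (Or.inl h)
    rw [degS, neighborSet_sup']
    rcases hvmem with hv | hv
    · have h1 : v ∈ Set.range f1 := by rw [hf1range]; exact hv
      have h2 : v ∉ Set.range f2 := by
        rw [hf2range]; exact fun hb => Set.disjoint_left.mp hdA'B' hv hb
      rw [hempb2 v h2, Set.union_empty, ← degS]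
      exact hdega2 v h1
    · have h2 : v ∈ Set.range f2 := by rw [hf2range]; exact hv
      have h1 : v ∉ Set.range f1 := by
        rw [hf1range]; exact fun hb => Set.disjoint_left.mp hdA'B' hb hv
      rw [hempa2 v h1, Set.empty_union, ← degS]
      exact hdegb2 v h2
end

section
/- Suppose 0 < 1/m ≪ 1/k ≤ ε ≪ ρ, 1/ℓ ≤ 1, ρ ≪ 1, 0 ≤ μ ≤ 1/4, and q ≤ (1−μ−ρ)m. Let (G, Q, C) be a (k, m, μ, ε)-cyclic system with C = V₁…V_k, and let PS₁,…,PS_q be path sequences such that each PS_s is locally balanced with respect to C, |V(PS_s) ∩ V_i| ≤ εm for all i, s, and for each i at most ℓm/k of the PS_s meet V_i. Then there exist directed 1-factors F₁,…,F_q in G + {PS_s} such that PS_s ⊆ F_s for all s and F₁−PS₁,…,F_q−PS_q are pairwise edge-disjoint subgraphs of G. -/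
set_option maxHeartbeats 1600000


open Finset

/-- Outdegree of a vertex in a digraph given as a finite set of ordered pairs. -/
def outdegD {V : Type*} [DecidableEq V] (G : Finset (V × V)) (v : V) : ℕ :=
  (G.filter fun e => e.1 = v).card

/-- Indegree of a vertex. -/
def indegD {V : Type*} [DecidableEq V] (G : Finset (V × V)) (v : V) : ℕ :=
  (G.filter fun e => e.2 = v).card

/-- The set of vertices covered by the edges of a digraph. -/
def suppD {V : Type*} [DecidableEq V] (G : Finset (V × V)) : Finset V :=
  G.image Prod.fst ∪ G.image Prod.snd

/-- A path sequence: a union of vertex-disjoint directed paths, i.e. all in- and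
outdegrees are at most one and there is no closed walk. -/
def IsPathSeq {V : Type*} [DecidableEq V] (P : Finset (V × V)) : Prop :=
  (∀ v, outdegD P v ≤ 1 ∧ indegD P v ≤ 1) ∧
  ∀ (n : ℕ) (f : Fin (n + 1) → V),
    ¬((∀ i : Fin n, (f i.castSucc, f i.succ) ∈ P) ∧ (f (Fin.last n), f 0) ∈ P)


section AuxLemmas

variable {V : Type} [DecidableEq V]



def nbO (H : Finset (V × V)) (T : Finset V) (a : V) : Finset V :=
  (H.filter fun e => e.1 = a ∧ e.2 ∈ T).image Prod.snd

lemma nbO_subset (H : Finset (V × V)) (T : Finset V) (a : V) : nbO H T a ⊆ T := by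
  intro b hb
  simp only [nbO, mem_image, mem_filter] at hb
  obtain ⟨e, ⟨-, -, h2⟩, rfl⟩ := hb
  exact h2

def matchingProp (M : Finset (V × V)) (As Bs : Finset V) : Prop :=
  (∀ v, outdegD M v = if v ∈ As then 1 else 0) ∧
  (∀ v, indegD M v = if v ∈ Bs then 1 else 0) ∧
  (∀ e ∈ M, e.1 ∈ As ∧ e.2 ∈ Bs)

lemma exists_matching (H : Finset (V × V)) (As Bs : Finset V)
    (hcard : As.card = Bs.card)
    (hall : ∀ S ⊆ As, S.card ≤ (S.biUnion (nbO H Bs)).card) :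
    ∃ M ⊆ H, matchingProp M As Bs := by
  -- apply Hall's theorem
  have key : ∀ s : Finset {x // x ∈ As}, s.card ≤ (s.biUnion fun a => nbO H Bs a.1).card := by
    intro s
    have h1 : (s.biUnion fun a => nbO H Bs a.1) = (s.image Subtype.val).biUnion (nbO H Bs) :=
      (Finset.image_biUnion).symm
    have h2 : s.card = (s.image Subtype.val).card :=
      (Finset.card_image_of_injective _ Subtype.val_injective).symm
    rw [h1, h2]
    exact hall _ (by intro x hx; simp only [mem_image] at hx; obtain ⟨a, -, rfl⟩ := hx; exact a.2)
  obtain ⟨f, hfinj, hf⟩ :=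
    (Finset.all_card_le_biUnion_card_iff_existsInjective' (fun a : {x // x ∈ As} => nbO H Bs a.1)).mp key
  set g : {x // x ∈ As} → V × V := fun a => ((a : V), f a) with hg
  have hginj : Function.Injective g := by
    intro a b hab
    apply Subtype.ext
    exact congrArg Prod.fst hab
  set M : Finset (V × V) := As.attach.image g with hM
  have hedge : ∀ a : {x // x ∈ As}, (↑a, f a) ∈ H ∧ f a ∈ Bs := by
    intro a
    have := hf a
    simp only [nbO, mem_image, mem_filter] at this
    obtain ⟨e, ⟨heH, he1, he2⟩, hsnd⟩ := this
    have : e = (↑a, f a) := by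
      cases e; cases he1; cases hsnd; rfl
    rw [this] at heH he2
    exact ⟨heH, he2⟩
  -- image of f is Bs
  have hImg : As.attach.image f = Bs := by
    apply Finset.eq_of_subset_of_card_le
    · intro v hv
      simp only [mem_image] at hv
      obtain ⟨a, -, rfl⟩ := hv
      exact (hedge a).2
    · rw [Finset.card_image_of_injective _ hfinj, Finset.card_attach, ← hcard]
  refine ⟨M, ?_, ?_, ?_, ?_⟩
  · intro e he
    simp only [hM, mem_image] at he
    obtain ⟨a, -, rfl⟩ := he
    exact (hedge a).1
  · intro v
    rw [outdegD, hM, Finset.filter_image, Finset.card_image_of_injective _ hginj]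
    show (As.attach.filter fun (a : {x // x ∈ As}) => (a : V) = v).card = _
    have hfi := Finset.filter_image (p := fun x => x = v) (f := (Subtype.val : {x // x ∈ As} → V)) (s := As.attach)
    rw [← Finset.card_image_of_injective (As.attach.filter fun (a : {x // x ∈ As}) => (a : V) = v)
      Subtype.val_injective, ← hfi, Finset.attach_image_val, Finset.filter_eq']
    split_ifs <;> simp
  · intro v
    rw [indegD, hM, Finset.filter_image, Finset.card_image_of_injective _ hginj]
    show (As.attach.filter fun (a : {x // x ∈ As}) => f a = v).card = _
    have hfi := Finset.filter_image (p := fun x => x = v) (f := f) (s := As.attach)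
    rw [← Finset.card_image_of_injective (As.attach.filter fun (a : {x // x ∈ As}) => f a = v) hfinj,
      ← hfi, hImg, Finset.filter_eq']
    split_ifs <;> simp
  · intro e he
    simp only [hM, mem_image] at he
    obtain ⟨a, -, rfl⟩ := he
    exact ⟨a.2, (hedge a).2⟩

lemma card_nbO (H : Finset (V × V)) (T : Finset V) (a : V) :
    (nbO H T a).card = (H.filter fun e => e.1 = a ∧ e.2 ∈ T).card := by
  apply Finset.card_image_of_injOn
  intro e he f hf hef
  simp only [coe_filter, Set.mem_setOf_eq] at he hf
  exact Prod.ext (he.2.1.trans hf.2.1.symm) hef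

lemma hall_cond_of_degrees (H : Finset (V × V)) (As Bs : Finset V) (dA dB : ℝ)
    (hA : ∀ a ∈ As, dA ≤ ((H.filter fun e => e.1 = a ∧ e.2 ∈ Bs).card : ℝ))
    (hB : ∀ b ∈ Bs, dB ≤ ((H.filter fun e => e.2 = b ∧ e.1 ∈ As).card : ℝ))
    (hsum : (As.card : ℝ) ≤ dA + dB) (hBA : As.card ≤ Bs.card) :
    ∀ S ⊆ As, S.card ≤ (S.biUnion (nbO H Bs)).card := by
  intro S hS
  rcases S.eq_empty_or_nonempty with rfl | ⟨a, ha⟩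
  · simp
  have hNa : nbO H Bs a ⊆ S.biUnion (nbO H Bs) := subset_biUnion_of_mem _ ha
  have hdA : dA ≤ ((S.biUnion (nbO H Bs)).card : ℝ) := by
    refine le_trans (hA a (hS ha)) ?_
    rw [← card_nbO]
    exact_mod_cast Nat.cast_le.mpr (card_le_card hNa)
  by_cases hcase : (S.card : ℝ) ≤ dA
  · exact_mod_cast hcase.trans hdA
  push_neg at hcase
  -- show Bs ⊆ N
  have hBsN : Bs ⊆ S.biUnion (nbO H Bs) := by
    intro b hb
    set Ib : Finset V := (H.filter fun e => e.2 = b ∧ e.1 ∈ As).image Prod.fst with hIbdef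
    have hIbcard : ((H.filter fun e => e.2 = b ∧ e.1 ∈ As).card : ℝ) ≤ (Ib.card : ℝ) := by
      rw [hIbdef]
      norm_cast
      apply le_of_eq
      symm
      apply Finset.card_image_of_injOn
      intro e he f hf hef
      simp only [coe_filter, Set.mem_setOf_eq] at he hf
      exact Prod.ext hef (he.2.1.trans hf.2.1.symm)
    have hIbAs : Ib ⊆ As := by
      intro x hx
      simp only [hIbdef, mem_image, mem_filter] at hx
      obtain ⟨e, ⟨-, -, h⟩, rfl⟩ := hx
      exact h
    have hmeet : ∃ x ∈ Ib, x ∈ S := by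
      by_contra hcon
      push_neg at hcon
      have hsub : Ib ⊆ As \ S := fun x hx => mem_sdiff.mpr ⟨hIbAs hx, hcon x hx⟩
      have h1 : (Ib.card : ℝ) ≤ ((As \ S).card : ℝ) := by exact_mod_cast card_le_card hsub
      have h2 : (As \ S).card = As.card - S.card := card_sdiff_of_subset hS
      have h3 : ((As \ S).card : ℝ) = (As.card : ℝ) - S.card := by
        rw [h2]; exact Nat.cast_sub (card_le_card hS)
      have := (hB b hb).trans (hIbcard.trans (h1.trans_eq h3))
      linarith
    obtain ⟨x, hxIb, hxS⟩ := hmeet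
    refine mem_biUnion.mpr ⟨x, hxS, ?_⟩
    simp only [hIbdef, mem_image, mem_filter] at hxIb
    obtain ⟨e, ⟨heH, he2, -⟩, rfl⟩ := hxIb
    simp only [nbO, mem_image, mem_filter]
    exact ⟨e, ⟨heH, rfl, he2 ▸ hb⟩, he2⟩
  calc S.card ≤ As.card := card_le_card hS
    _ ≤ Bs.card := hBA
    _ ≤ _ := card_le_card hBsN


lemma sum_out_filter (H : Finset (V × V)) (S : Finset V) :
    (H.filter fun e => e.1 ∈ S).card = ∑ a ∈ S, outdegD H a := by
  rw [Finset.card_eq_sum_card_fiberwise (f := Prod.fst) (t := S) (s := H.filter fun e => e.1 ∈ S)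
    (fun e he => (mem_filter.mp he).2)]
  refine Finset.sum_congr rfl fun a ha => ?_
  rw [Finset.filter_filter]
  unfold outdegD
  congr 1
  apply Finset.filter_congr
  intro e _
  constructor
  · exact fun h => h.2
  · exact fun h => ⟨by simp [h, ha], h⟩

lemma sum_in_filter (H : Finset (V × V)) (T : Finset V) :
    (H.filter fun e => e.2 ∈ T).card = ∑ b ∈ T, indegD H b := by
  rw [Finset.card_eq_sum_card_fiberwise (f := Prod.snd) (t := T) (s := H.filter fun e => e.2 ∈ T)
    (fun e he => (mem_filter.mp he).2)]
  refine Finset.sum_congr rfl fun b hb => ?_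
  rw [Finset.filter_filter]
  unfold indegD
  congr 1
  apply Finset.filter_congr
  intro e _
  constructor
  · exact fun h => h.2
  · exact fun h => ⟨by simp [h, hb], h⟩

lemma out_split (H : Finset (V × V)) (S T : Finset V) :
    (H.filter fun e => e.1 ∈ S).card = (H.filter fun e => e.1 ∈ S ∧ e.2 ∈ T).card +
      (H.filter fun e => e.1 ∈ S ∧ ¬(e.2 ∈ T)).card := by
  rw [← Finset.filter_filter, ← Finset.filter_filter]
  exact (Finset.card_filter_add_card_filter_not (p := fun e : V × V => e.2 ∈ T)).symm

lemma in_split (H : Finset (V × V)) (S T : Finset V) :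
    (H.filter fun e => e.2 ∈ T).card = (H.filter fun e => e.2 ∈ T ∧ e.1 ∈ S).card +
      (H.filter fun e => e.2 ∈ T ∧ ¬(e.1 ∈ S)).card := by
  rw [← Finset.filter_filter, ← Finset.filter_filter]
  exact (Finset.card_filter_add_card_filter_not (p := fun e : V × V => e.1 ∈ S)).symm

lemma cross_le_card (H : Finset (V × V)) (S : Finset V) (U : Finset V)
    (hheads : ∀ e ∈ H, e.2 ∈ U → e.2 ∈ U) :
    (H.filter fun e => e.1 ∈ S ∧ e.2 ∈ U).card ≤ S.card * U.card := by
  rw [Finset.card_eq_sum_card_fiberwise (f := Prod.fst) (t := S)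
    (fun e he => (mem_filter.mp he).2.1)]
  calc ∑ a ∈ S, ((H.filter fun e => e.1 ∈ S ∧ e.2 ∈ U).filter fun e => e.1 = a).card
      ≤ ∑ _a ∈ S, U.card := by
        apply Finset.sum_le_sum
        intro a _
        apply Finset.card_le_card_of_injOn Prod.snd
        · intro e he
          simp only [mem_coe, mem_filter] at he
          exact he.1.2.2
        · intro e he f hf hef
          simp only [coe_filter, Set.mem_setOf_eq] at he hf
          exact Prod.ext (he.2.trans hf.2.symm) hef
    _ = S.card * U.card := by rw [Finset.sum_const, smul_eq_mul]

lemma cross_le_card' (H : Finset (V × V)) (T : Finset V) (U : Finset V) :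
    (H.filter fun e => e.2 ∈ T ∧ e.1 ∈ U).card ≤ T.card * U.card := by
  rw [Finset.card_eq_sum_card_fiberwise (f := Prod.snd) (t := T)
    (fun e he => (mem_filter.mp he).2.1)]
  calc ∑ b ∈ T, ((H.filter fun e => e.2 ∈ T ∧ e.1 ∈ U).filter fun e => e.2 = b).card
      ≤ ∑ _b ∈ T, U.card := by
        apply Finset.sum_le_sum
        intro b _
        apply Finset.card_le_card_of_injOn Prod.fst
        · intro e he
          simp only [mem_coe, mem_filter] at he
          exact he.1.2.2
        · intro e he f hf hef
          simp only [coe_filter, Set.mem_setOf_eq] at he hf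
          exact Prod.ext hef (he.2.trans hf.2.symm)
    _ = T.card * U.card := by rw [Finset.sum_const, smul_eq_mul]

lemma cross_le_sum_in (H : Finset (V × V)) (S : Finset V) (U : Finset V)
    (hheads : ∀ e ∈ H, e.1 ∈ S ∧ e.2 ∈ U → e.2 ∈ U) :
    (H.filter fun e => e.1 ∈ S ∧ e.2 ∈ U).card ≤ ∑ b ∈ U, indegD H b := by
  rw [Finset.card_eq_sum_card_fiberwise (f := Prod.snd) (t := U)
    (fun e he => (mem_filter.mp he).2.2)]
  apply Finset.sum_le_sum
  intro b _
  apply Finset.card_le_card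
  intro e he
  simp only [mem_filter] at he ⊢
  exact ⟨he.1.1, he.2⟩

lemma cross_le_sum_out (H : Finset (V × V)) (T : Finset V) (U : Finset V) :
    (H.filter fun e => e.2 ∈ T ∧ e.1 ∈ U).card ≤ ∑ a ∈ U, outdegD H a := by
  rw [Finset.card_eq_sum_card_fiberwise (f := Prod.fst) (t := U)
    (fun e he => (mem_filter.mp he).2.2)]
  apply Finset.sum_le_sum
  intro a _
  apply Finset.card_le_card
  intro e he
  simp only [mem_filter] at he ⊢
  exact ⟨he.1.1, he.2⟩

lemma cut_arith_aux (m x y w t δ Δ e ρ : ℝ) (hw : w = x + y - m) (hw1 : 0 < w)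
    (hyx : y ≤ x)
    (hx0 : 0 ≤ x) (hy0 : 0 ≤ y) (hx : x ≤ m) (hy : y ≤ m)
    (h1 : x*δ - x*(m - y) ≤ e) (h2 : y*δ - y*(m - x) ≤ e)
    (h3 : x*δ - (m-y)*Δ ≤ e)
    (hδ : (72/100 : ℝ)*m ≤ δ) (hδm : δ ≤ m) (hδΔ : δ ≤ Δ)
    (hspread : Δ - δ ≤ ρ^2*m/100) (ht : 0 ≤ t) (htδ : t ≤ δ - ρ*m/2)
    (hρ : 0 < ρ) (hρ' : ρ ≤ 1/100) : t*w ≤ e := by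
  have hm0 : 0 < m := by nlinarith
  have hρm : 0 ≤ ρ*m := by positivity
  have htδ' : t ≤ δ := by linarith
  have hwy : w ≤ y := by linarith
  have hwx : w ≤ x := by linarith
  by_cases hcy : y ≤ (3/10 : ℝ)*m
  · have hid : y*(m-x) = y*(y-w) := by rw [show m - x = y - w from by linarith]
    have key : e - t*w ≥ y*δ - y^2 + w*y - w*t := by nlinarith [h2, hid]
    have f1 : w*t ≤ w*δ := mul_le_mul_of_nonneg_left htδ' hw1.le
    have f2 : 0 ≤ (y-w)*(δ-y) := mul_nonneg (by linarith) (by linarith)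
    nlinarith [key, f1, f2]
  · push_neg at hcy
    by_cases hbig : m*(Δ-δ) ≤ w*(δ-t)
    · have hid2 : (m-y)*Δ = (x-w)*Δ := by rw [show m - y = x - w from by linarith]
      have f1 : x*(Δ-δ) ≤ m*(Δ-δ) := mul_le_mul_of_nonneg_right hx (by linarith)
      have f2 : w*(δ-t) ≤ w*(Δ-t) := mul_le_mul_of_nonneg_left (by linarith) hw1.le
      nlinarith [h3, hid2, f1, f2, hbig]
    · push_neg at hbig
      have hsw : w*(ρ*m/2) < m*(ρ^2*m/100) := by
        calc w*(ρ*m/2) ≤ w*(δ-t) := mul_le_mul_of_nonneg_left (by linarith) hw1.le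
          _ < m*(Δ-δ) := hbig
          _ ≤ m*(ρ^2*m/100) := mul_le_mul_of_nonneg_left hspread hm0.le
      have hwm : w*m < ρ*m^2/50 := by
        have hstep : (ρ/2)*(w*m) < (ρ/2)*(ρ*m^2/50) := by linarith [hsw]
        exact (mul_lt_mul_iff_right₀ (by positivity : (0:ℝ) < ρ/2)).mp hstep
      have hx3 : (3/10 : ℝ)*m ≤ x := by linarith
      have brack : (2/100 : ℝ)*m ≤ δ - (m - y) := by linarith
      have f3 : ((3/10 : ℝ)*m)*((2/100)*m) ≤ x*((2/100)*m) :=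
        mul_le_mul_of_nonneg_right hx3 (by positivity)
      have f4 : x*((2/100 : ℝ)*m) ≤ x*(δ-(m-y)) := mul_le_mul_of_nonneg_left brack hx0
      have f5 : x*(δ-(m-y)) = x*δ - x*(m-y) := by ring
      have htw : t*w ≤ m*w := mul_le_mul_of_nonneg_right (by linarith) hw1.le
      have f6 : ρ*m^2 ≤ (1/100)*m^2 := mul_le_mul_of_nonneg_right hρ' (sq_nonneg m)
      nlinarith [h1, f3, f4, f5, htw, hwm, f6]

lemma cut_arith (m x y w t δ Δ e ρ : ℝ) (hw : w = x + y - m) (hw1 : 0 < w)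
    (hx0 : 0 ≤ x) (hy0 : 0 ≤ y) (hx : x ≤ m) (hy : y ≤ m)
    (h1 : x*δ - x*(m - y) ≤ e) (h2 : y*δ - y*(m - x) ≤ e)
    (h3 : x*δ - (m-y)*Δ ≤ e) (h4 : y*δ - (m-x)*Δ ≤ e)
    (hδ : (72/100 : ℝ)*m ≤ δ) (hδm : δ ≤ m) (hδΔ : δ ≤ Δ)
    (hspread : Δ - δ ≤ ρ^2*m/100) (ht : 0 ≤ t) (htδ : t ≤ δ - ρ*m/2)
    (hρ : 0 < ρ) (hρ' : ρ ≤ 1/100) : t*w ≤ e := by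
  rcases le_total y x with h | h
  · exact cut_arith_aux m x y w t δ Δ e ρ hw hw1 h hx0 hy0 hx hy h1 h2 h3 hδ hδm hδΔ hspread ht htδ hρ hρ'
  · exact cut_arith_aux m y x w t δ Δ e ρ (by linarith) hw1 h hy0 hx0 hy hx h2 h1 h4 hδ hδm hδΔ hspread ht htδ hρ hρ'

lemma cut_cond (H : Finset (V × V)) (A B : Finset V) (m : ℕ) (δ Δ ρ : ℝ) (t : ℕ)
    (hA : A.card = m) (hB : B.card = m) (hends : ∀ e ∈ H, e.1 ∈ A ∧ e.2 ∈ B)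
    (hout : ∀ a ∈ A, δ ≤ (outdegD H a : ℝ) ∧ (outdegD H a : ℝ) ≤ Δ)
    (hin : ∀ b ∈ B, δ ≤ (indegD H b : ℝ) ∧ (indegD H b : ℝ) ≤ Δ)
    (hδ : (72/100 : ℝ)*m ≤ δ) (hδm : δ ≤ (m:ℝ)) (hδΔ : δ ≤ Δ) (hspread : Δ - δ ≤ ρ^2*m/100)
    (ht : (t:ℝ) ≤ δ - ρ*m/2) (hρ : 0 < ρ) (hρ' : ρ ≤ 1/100) :
    ∀ S ⊆ A, ∀ T ⊆ B,
      (t:ℝ) * (S.card + T.card - m) ≤ ((H.filter fun e => e.1 ∈ S ∧ e.2 ∈ T).card : ℝ) := by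
  intro S hS T hT
  rcases le_or_gt ((S.card:ℝ) + T.card - m) 0 with hw | hw
  · exact (mul_nonpos_of_nonneg_of_nonpos (Nat.cast_nonneg t) hw).trans (Nat.cast_nonneg _)
  have hxm : (S.card : ℝ) ≤ m := by exact_mod_cast hA ▸ card_le_card hS
  have hym : (T.card : ℝ) ≤ m := by exact_mod_cast hB ▸ card_le_card hT
  have hyB : T.card ≤ m := hB ▸ card_le_card hT
  have hxA : S.card ≤ m := hA ▸ card_le_card hS
  have hbt : ((B \ T).card : ℝ) = (m:ℝ) - T.card := by
    rw [card_sdiff_of_subset hT, hB, Nat.cast_sub hyB]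
  have has : ((A \ S).card : ℝ) = (m:ℝ) - S.card := by
    rw [card_sdiff_of_subset hS, hA, Nat.cast_sub hxA]
  have hfilt_out : (H.filter fun e => e.1 ∈ S ∧ ¬(e.2 ∈ T)) =
      (H.filter fun e => e.1 ∈ S ∧ e.2 ∈ (B \ T)) := by
    apply filter_congr
    intro e he
    simp only [mem_sdiff, (hends e he).2, true_and]
  have hfilt_in : (H.filter fun e => e.2 ∈ T ∧ ¬(e.1 ∈ S)) =
      (H.filter fun e => e.2 ∈ T ∧ e.1 ∈ (A \ S)) := by
    apply filter_congr
    intro e he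
    simp only [mem_sdiff, (hends e he).1, true_and]
  -- sums of degrees
  have hsumout : (S.card : ℝ) * δ ≤ ((∑ a ∈ S, outdegD H a : ℕ) : ℝ) := by
    push_cast
    calc (S.card:ℝ)*δ = ∑ _a ∈ S, δ := by rw [Finset.sum_const, nsmul_eq_mul]
      _ ≤ ∑ a ∈ S, (outdegD H a : ℝ) := Finset.sum_le_sum fun a ha => (hout a (hS ha)).1
  have hsumin : (T.card : ℝ) * δ ≤ ((∑ b ∈ T, indegD H b : ℕ) : ℝ) := by
    push_cast
    calc (T.card:ℝ)*δ = ∑ _b ∈ T, δ := by rw [Finset.sum_const, nsmul_eq_mul]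
      _ ≤ ∑ b ∈ T, (indegD H b : ℝ) := Finset.sum_le_sum fun b hb => (hin b (hT hb)).1
  -- cross bounds
  have hcross1 : ((H.filter fun e => e.1 ∈ S ∧ ¬(e.2 ∈ T)).card : ℝ) ≤
      (S.card : ℝ) * ((m:ℝ) - T.card) := by
    rw [hfilt_out, ← hbt]
    exact_mod_cast cross_le_card H S (B \ T) (fun e _ h => h)
  have hcross2 : ((H.filter fun e => e.2 ∈ T ∧ ¬(e.1 ∈ S)).card : ℝ) ≤
      (T.card : ℝ) * ((m:ℝ) - S.card) := by
    rw [hfilt_in, ← has]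
    exact_mod_cast cross_le_card' H T (A \ S)
  have hcross3 : ((H.filter fun e => e.1 ∈ S ∧ ¬(e.2 ∈ T)).card : ℝ) ≤
      ((m:ℝ) - T.card) * Δ := by
    rw [hfilt_out, ← hbt]
    calc ((H.filter fun e => e.1 ∈ S ∧ e.2 ∈ (B \ T)).card : ℝ)
        ≤ ((∑ b ∈ B \ T, indegD H b : ℕ) : ℝ) := by
          exact_mod_cast cross_le_sum_in H S (B \ T) (fun e _ h => h.2)
      _ ≤ ((B \ T).card : ℝ) * Δ := by
          push_cast
          calc ∑ b ∈ B \ T, (indegD H b : ℝ) ≤ ∑ _b ∈ B \ T, Δ :=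
                Finset.sum_le_sum fun b hb => (hin b (mem_sdiff.mp hb).1).2
            _ = ((B \ T).card : ℝ) * Δ := by rw [Finset.sum_const, nsmul_eq_mul]
  have hcross4 : ((H.filter fun e => e.2 ∈ T ∧ ¬(e.1 ∈ S)).card : ℝ) ≤
      ((m:ℝ) - S.card) * Δ := by
    rw [hfilt_in, ← has]
    calc ((H.filter fun e => e.2 ∈ T ∧ e.1 ∈ (A \ S)).card : ℝ)
        ≤ ((∑ a ∈ A \ S, outdegD H a : ℕ) : ℝ) := by
          exact_mod_cast cross_le_sum_out H T (A \ S)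
      _ ≤ ((A \ S).card : ℝ) * Δ := by
          push_cast
          calc ∑ a ∈ A \ S, (outdegD H a : ℝ) ≤ ∑ _a ∈ A \ S, Δ :=
                Finset.sum_le_sum fun a ha => (hout a (mem_sdiff.mp ha).1).2
            _ = ((A \ S).card : ℝ) * Δ := by rw [Finset.sum_const, nsmul_eq_mul]
  -- splits
  have hn1 := out_split H S T
  have hn2 := sum_out_filter H S
  have hn3 := in_split H S T
  have hn4 := sum_in_filter H T
  have hswap : (H.filter fun e => e.2 ∈ T ∧ e.1 ∈ S).card =
      (H.filter fun e => e.1 ∈ S ∧ e.2 ∈ T).card := by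
    congr 1
    apply filter_congr
    intro e _
    exact and_comm
  have key1 : (S.card : ℝ) * δ - (S.card : ℝ) * ((m:ℝ) - T.card) ≤
      ((H.filter fun e => e.1 ∈ S ∧ e.2 ∈ T).card : ℝ) := by
    have e1 : ((H.filter fun e => e.1 ∈ S).card : ℝ) =
        ((H.filter fun e => e.1 ∈ S ∧ e.2 ∈ T).card : ℝ) +
        ((H.filter fun e => e.1 ∈ S ∧ ¬(e.2 ∈ T)).card : ℝ) := by exact_mod_cast hn1
    have e2 : ((H.filter fun e => e.1 ∈ S).card : ℝ) = ((∑ a ∈ S, outdegD H a : ℕ) : ℝ) := by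
      exact_mod_cast hn2
    linarith
  have key3 : (S.card : ℝ) * δ - ((m:ℝ) - T.card) * Δ ≤
      ((H.filter fun e => e.1 ∈ S ∧ e.2 ∈ T).card : ℝ) := by
    have e1 : ((H.filter fun e => e.1 ∈ S).card : ℝ) =
        ((H.filter fun e => e.1 ∈ S ∧ e.2 ∈ T).card : ℝ) +
        ((H.filter fun e => e.1 ∈ S ∧ ¬(e.2 ∈ T)).card : ℝ) := by exact_mod_cast hn1
    have e2 : ((H.filter fun e => e.1 ∈ S).card : ℝ) = ((∑ a ∈ S, outdegD H a : ℕ) : ℝ) := by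
      exact_mod_cast hn2
    linarith
  have key2 : (T.card : ℝ) * δ - (T.card : ℝ) * ((m:ℝ) - S.card) ≤
      ((H.filter fun e => e.1 ∈ S ∧ e.2 ∈ T).card : ℝ) := by
    have e1 : ((H.filter fun e => e.2 ∈ T).card : ℝ) =
        ((H.filter fun e => e.2 ∈ T ∧ e.1 ∈ S).card : ℝ) +
        ((H.filter fun e => e.2 ∈ T ∧ ¬(e.1 ∈ S)).card : ℝ) := by exact_mod_cast hn3
    have e2 : ((H.filter fun e => e.2 ∈ T).card : ℝ) = ((∑ b ∈ T, indegD H b : ℕ) : ℝ) := by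
      exact_mod_cast hn4
    have e3 : ((H.filter fun e => e.2 ∈ T ∧ e.1 ∈ S).card : ℝ) =
        ((H.filter fun e => e.1 ∈ S ∧ e.2 ∈ T).card : ℝ) := by exact_mod_cast hswap
    linarith
  have key4 : (T.card : ℝ) * δ - ((m:ℝ) - S.card) * Δ ≤
      ((H.filter fun e => e.1 ∈ S ∧ e.2 ∈ T).card : ℝ) := by
    have e1 : ((H.filter fun e => e.2 ∈ T).card : ℝ) =
        ((H.filter fun e => e.2 ∈ T ∧ e.1 ∈ S).card : ℝ) +
        ((H.filter fun e => e.2 ∈ T ∧ ¬(e.1 ∈ S)).card : ℝ) := by exact_mod_cast hn3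
    have e2 : ((H.filter fun e => e.2 ∈ T).card : ℝ) = ((∑ b ∈ T, indegD H b : ℕ) : ℝ) := by
      exact_mod_cast hn4
    have e3 : ((H.filter fun e => e.2 ∈ T ∧ e.1 ∈ S).card : ℝ) =
        ((H.filter fun e => e.1 ∈ S ∧ e.2 ∈ T).card : ℝ) := by exact_mod_cast hswap
    linarith
  exact cut_arith (m:ℝ) (S.card) (T.card) ((S.card:ℝ) + T.card - m) (t:ℝ) δ Δ _ ρ rfl hw
    (Nat.cast_nonneg _) (Nat.cast_nonneg _) hxm hym key1 key2 key3 key4 hδ hδm hδΔ hspread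
    (Nat.cast_nonneg _) ht hρ hρ'


lemma exists_factor (H : Finset (V × V)) (A B : Finset V) (m : ℕ) (δ Δ ρ : ℝ) (t : ℕ)
    (hA : A.card = m) (hB : B.card = m) (hends : ∀ e ∈ H, e.1 ∈ A ∧ e.2 ∈ B)
    (hout : ∀ a ∈ A, δ ≤ (outdegD H a : ℝ) ∧ (outdegD H a : ℝ) ≤ Δ)
    (hin : ∀ b ∈ B, δ ≤ (indegD H b : ℝ) ∧ (indegD H b : ℝ) ≤ Δ)
    (hδ : (72/100 : ℝ)*m ≤ δ) (hδm : δ ≤ (m:ℝ)) (hδΔ : δ ≤ Δ) (hspread : Δ - δ ≤ ρ^2*m/100)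
    (ht : (t:ℝ) ≤ δ - ρ*m/2) (hρ : 0 < ρ) (hρ' : ρ ≤ 1/100) :
    ∃ K ⊆ H, (∀ a ∈ A, outdegD K a = t) ∧ (∀ b ∈ B, indegD K b = t) := by
  classical
  have hρm : (0:ℝ) ≤ ρ*m/2 := by positivity
  have htout : ∀ a ∈ A, t ≤ outdegD H a := by
    intro a ha
    have := (hout a ha).1
    exact_mod_cast le_trans (by linarith : (t:ℝ) ≤ δ) this
  have htin : ∀ b ∈ B, t ≤ indegD H b := by
    intro b hb
    have := (hin b hb).1
    exact_mod_cast le_trans (by linarith : (t:ℝ) ≤ δ) this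
  -- the gadget bipartite graph
  set W := ((V × V) ⊕ (V × ℕ)) with hW
  set LF : Finset W := H.image Sum.inl ∪
    B.biUnion (fun b => (Finset.range (indegD H b - t)).image fun j => Sum.inr (b, j)) with hLF
  set RF : Finset W := H.image Sum.inl ∪
    A.biUnion (fun a => (Finset.range (outdegD H a - t)).image fun j => Sum.inr (a, j)) with hRF
  set tfun : W → Finset W := fun w =>
    Sum.elim
      (fun e => {Sum.inl e} ∪ (Finset.range (outdegD H e.1 - t)).image
        (fun j => (Sum.inr (e.1, j) : W)))
      (fun p => (H.filter fun e => e.2 = p.1).image Sum.inl) w with htfun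
  -- membership characterizations
  have hLFinl : ∀ e : V × V, (Sum.inl e ∈ LF) ↔ e ∈ H := by
    intro e
    simp [hLF]
  have hLFinr : ∀ (b : V) (j : ℕ), (Sum.inr (b, j) : W) ∈ LF ↔ b ∈ B ∧ j < indegD H b - t := by
    intro b j
    simp [hLF]
  have hRFinl : ∀ e : V × V, (Sum.inl e ∈ RF) ↔ e ∈ H := by
    intro e
    simp [hRF]
  have hRFinr : ∀ (a : V) (j : ℕ), (Sum.inr (a, j) : W) ∈ RF ↔ a ∈ A ∧ j < outdegD H a - t := by
    intro a j
    simp [hRF]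
  -- cardinalities of LF and RF
  have hinjr : ∀ v : V, Function.Injective (fun j => (Sum.inr (v, j) : W)) := by
    intro v j j' h
    simpa using h
  have hdisj_biU : ∀ (C : Finset V) (g : V → ℕ), ∀ b ∈ C, ∀ b' ∈ C, b ≠ b' →
      Disjoint ((Finset.range (g b)).image fun j => (Sum.inr (b, j) : W))
        ((Finset.range (g b')).image fun j => (Sum.inr (b', j) : W)) := by
    intro C g b _ b' _ hbb'
    rw [Finset.disjoint_left]
    intro w hw hw'
    simp only [mem_image, mem_range] at hw hw'
    obtain ⟨j, -, rfl⟩ := hw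
    obtain ⟨j', -, h⟩ := hw'
    simp only [Sum.inr.injEq, Prod.mk.injEq] at h
    exact hbb' h.1.symm
  have hdisj_lr : ∀ (C : Finset V) (g : V → ℕ),
      Disjoint (H.image Sum.inl) (C.biUnion fun b => (Finset.range (g b)).image
        fun j => (Sum.inr (b, j) : W)) := by
    intro C g
    rw [Finset.disjoint_left]
    intro w hw hw'
    simp only [mem_image] at hw
    simp only [mem_biUnion, mem_image] at hw'
    obtain ⟨e, -, rfl⟩ := hw
    obtain ⟨b, -, j, -, h⟩ := hw'
    exact absurd h (by simp)
  have hcard_biU : ∀ (C : Finset V) (g : V → ℕ),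
      (C.biUnion fun b => (Finset.range (g b)).image fun j => (Sum.inr (b, j) : W)).card
        = ∑ b ∈ C, g b := by
    intro C g
    rw [Finset.card_biUnion (hdisj_biU C g)]
    refine Finset.sum_congr rfl fun b _ => ?_
    rw [Finset.card_image_of_injective _ (hinjr b), Finset.card_range]
  have hcardLF : LF.card = H.card + ∑ b ∈ B, (indegD H b - t) := by
    rw [hLF, Finset.card_union_of_disjoint (hdisj_lr _ _),
      Finset.card_image_of_injective _ Sum.inl_injective, hcard_biU]
  have hcardRF : RF.card = H.card + ∑ a ∈ A, (outdegD H a - t) := by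
    rw [hRF, Finset.card_union_of_disjoint (hdisj_lr _ _),
      Finset.card_image_of_injective _ Sum.inl_injective, hcard_biU]
  have hHout : H.card = ∑ a ∈ A, outdegD H a := by
    rw [← sum_out_filter H A, Finset.filter_true_of_mem fun e he => (hends e he).1]
  have hHin : H.card = ∑ b ∈ B, indegD H b := by
    rw [← sum_in_filter H B, Finset.filter_true_of_mem fun e he => (hends e he).2]
  have hsubB : ∑ b ∈ B, (indegD H b - t) + t * m = ∑ b ∈ B, indegD H b := by
    calc ∑ b ∈ B, (indegD H b - t) + t * m = ∑ b ∈ B, ((indegD H b - t) + t) := by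
          rw [Finset.sum_add_distrib, Finset.sum_const, smul_eq_mul, hB, mul_comm]
      _ = ∑ b ∈ B, indegD H b := Finset.sum_congr rfl fun b hb => Nat.sub_add_cancel (htin b hb)
  have hsubA : ∑ a ∈ A, (outdegD H a - t) + t * m = ∑ a ∈ A, outdegD H a := by
    calc ∑ a ∈ A, (outdegD H a - t) + t * m = ∑ a ∈ A, ((outdegD H a - t) + t) := by
          rw [Finset.sum_add_distrib, Finset.sum_const, smul_eq_mul, hA, mul_comm]
      _ = ∑ a ∈ A, outdegD H a := Finset.sum_congr rfl fun a ha => Nat.sub_add_cancel (htout a ha)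
  have hcards_eq : LF.card = RF.card := by
    rw [hcardLF, hcardRF]
    omega
  -- the Hall condition for the gadget
  have hall : ∀ s : Finset {x // x ∈ LF}, s.card ≤ (s.biUnion fun x => tfun x.1).card := by
    intro s
    set s' : Finset W := s.image Subtype.val with hs'
    have hs'sub : s' ⊆ LF := by
      intro w hw
      simp only [hs', mem_image] at hw
      obtain ⟨x, -, rfl⟩ := hw
      exact x.2
    have hscard : s.card = s'.card :=
      (Finset.card_image_of_injective _ Subtype.val_injective).symm
    have hbiU : (s.biUnion fun x => tfun x.1) = s'.biUnion tfun := by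
      rw [hs', Finset.image_biUnion]
    rw [hscard, hbiU]
    -- decompose s'
    set P : Finset (V × V) := H.filter (fun e => Sum.inl e ∈ s') with hP
    set Dp : Finset W := s'.filter (fun w => w.isRight = true) with hDp
    have hsplit : s' = P.image Sum.inl ∪ Dp := by
      ext w
      constructor
      · intro hw
        rcases w with e | p
        · refine mem_union_left _ ?_
          simp only [hP, mem_image, mem_filter]
          exact ⟨e, ⟨(hLFinl e).mp (hs'sub hw), hw⟩, rfl⟩
        · exact mem_union_right _ (mem_filter.mpr ⟨hw, rfl⟩)
      · intro hw
        rcases mem_union.mp hw with hw | hw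
        · simp only [hP, mem_image, mem_filter] at hw
          obtain ⟨e, ⟨-, he⟩, rfl⟩ := hw
          exact he
        · exact (mem_filter.mp hw).1
    have hdisjPD : Disjoint (P.image Sum.inl) Dp := by
      rw [Finset.disjoint_left]
      intro w hw hw'
      simp only [mem_image] at hw
      obtain ⟨e, -, rfl⟩ := hw
      simp [hDp] at hw'
    have hs'card2 : s'.card = P.card + Dp.card := by
      rw [hsplit, Finset.card_union_of_disjoint hdisjPD,
        Finset.card_image_of_injective _ Sum.inl_injective]
    -- the sets S and Tb
    set Tb : Finset V := Dp.image (Sum.elim (fun e => e.1) (fun p => p.1)) with hTb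
    have hTbB : Tb ⊆ B := by
      intro b hb
      simp only [hTb, mem_image] at hb
      obtain ⟨w, hw, rfl⟩ := hb
      have hw' := (mem_filter.mp hw).2
      have hwLF := hs'sub (mem_filter.mp hw).1
      rcases w with e | p
      · simp at hw'
      · exact ((hLFinr p.1 p.2).mp (by simpa using hwLF)).1
    set S : Finset V := P.image Prod.fst with hS
    have hSA : S ⊆ A := by
      intro a ha
      simp only [hS, mem_image] at ha
      obtain ⟨e, he, rfl⟩ := ha
      exact (hends e (mem_filter.mp he).1).1
    -- bound on Dp
    have hDple : Dp.card ≤ ∑ b ∈ Tb, (indegD H b - t) := by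
      rw [← hcard_biU Tb (fun b => indegD H b - t)]
      apply Finset.card_le_card
      intro w hw
      have hw1 := (mem_filter.mp hw).1
      have hw2 := (mem_filter.mp hw).2
      have hwLF := hs'sub hw1
      rcases w with e | p
      · simp at hw2
      · obtain ⟨b, j⟩ := p
        have := (hLFinr b j).mp (by simpa using hwLF)
        refine mem_biUnion.mpr ⟨b, ?_, ?_⟩
        · simp only [hTb, mem_image]
          exact ⟨Sum.inr (b, j), hw, rfl⟩
        · exact mem_image.mpr ⟨j, mem_range.mpr this.2, rfl⟩
    -- lower bound for the neighbourhood
    set ET : Finset (V × V) := H.filter (fun e => e.2 ∈ Tb) with hET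
    set NN : Finset W := (P ∪ ET).image Sum.inl ∪
      (S.biUnion fun a => (Finset.range (outdegD H a - t)).image fun j => (Sum.inr (a, j) : W))
      with hNN
    have hNsub : NN ⊆ s'.biUnion tfun := by
      intro w hw
      rcases mem_union.mp hw with hw | hw
      · simp only [mem_image] at hw
        obtain ⟨e, he, rfl⟩ := hw
        rcases mem_union.mp he with he | he
        · refine mem_biUnion.mpr ⟨Sum.inl e, (mem_filter.mp he).2, ?_⟩
          simp [htfun]
        · -- e ∈ ET : use the dummy of b := e.2 that lies in s'
          have he2 : e.2 ∈ Tb := (mem_filter.mp he).2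
          simp only [hTb, mem_image] at he2
          obtain ⟨w', hw', hkey⟩ := he2
          have hw'1 := (mem_filter.mp hw').1
          have hw'2 := (mem_filter.mp hw').2
          rcases w' with e' | p
          · simp at hw'2
          · refine mem_biUnion.mpr ⟨Sum.inr p, hw'1, ?_⟩
            simp only [htfun, Sum.elim_inr, mem_image]
            refine ⟨e, mem_filter.mpr ⟨(mem_filter.mp he).1, ?_⟩, rfl⟩
            simpa using hkey.symm
      · simp only [mem_biUnion, mem_image] at hw
        obtain ⟨a, ha, j, hj, rfl⟩ := hw
        simp only [hS, mem_image] at ha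
        obtain ⟨e, he, rfl⟩ := ha
        refine mem_biUnion.mpr ⟨Sum.inl e, (mem_filter.mp he).2, ?_⟩
        simp only [htfun, Sum.elim_inl, mem_union, mem_image]
        exact Or.inr ⟨j, hj, rfl⟩
    have hdisjNN : Disjoint ((P ∪ ET).image Sum.inl)
        (S.biUnion fun a => (Finset.range (outdegD H a - t)).image
          fun j => (Sum.inr (a, j) : W)) := by
      rw [Finset.disjoint_left]
      intro w hw hw'
      simp only [mem_image] at hw
      obtain ⟨e, -, rfl⟩ := hw
      simp only [mem_biUnion, mem_image] at hw'
      obtain ⟨a, -, j, -, h⟩ := hw'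
      exact absurd h (by simp)
    have hNNcard : NN.card = (P ∪ ET).card + ∑ a ∈ S, (outdegD H a - t) := by
      rw [hNN, Finset.card_union_of_disjoint hdisjNN,
        Finset.card_image_of_injective _ Sum.inl_injective, hcard_biU]
    have hNle : NN.card ≤ (s'.biUnion tfun).card := Finset.card_le_card hNsub
    -- the counting part, all in ℝ
    have hPETsub : P ∩ ET ⊆ H.filter (fun e => e.1 ∈ S ∧ e.2 ∈ Tb) := by
      intro e he
      obtain ⟨heP, heET⟩ := mem_inter.mp he
      refine mem_filter.mpr ⟨(mem_filter.mp heP).1, ?_, (mem_filter.mp heET).2⟩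
      exact mem_image.mpr ⟨e, heP, rfl⟩
    have hUI := Finset.card_union_add_card_inter P ET
    have hI : (P ∩ ET).card ≤ (H.filter fun e => e.1 ∈ S ∧ e.2 ∈ Tb).card :=
      card_le_card hPETsub
    have hETsum : ET.card = ∑ b ∈ Tb, indegD H b := sum_in_filter H Tb
    have hsplitS := out_split H S Tb
    have hsumS := sum_out_filter H S
    have htble : Tb.card ≤ m := hB ▸ card_le_card hTbB
    have hBTb : ((B \ Tb).card : ℝ) = (m : ℝ) - Tb.card := by
      rw [card_sdiff_of_subset hTbB, hB, Nat.cast_sub htble]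
    have hfeq : (H.filter fun e => e.1 ∈ S ∧ e.2 ∈ (B \ Tb)) =
        (H.filter fun e => e.1 ∈ S ∧ ¬(e.2 ∈ Tb)) := by
      apply filter_congr
      intro e he
      simp only [mem_sdiff, (hends e he).2, true_and]
    have hcut := cut_cond H A B m δ Δ ρ t hA hB hends hout hin hδ hδm hδΔ hspread ht hρ hρ'
      S hSA (B \ Tb) sdiff_subset
    rw [hfeq, hBTb] at hcut
    have hcut' : (t:ℝ)*S.card - t*Tb.card ≤
        ((H.filter fun e => e.1 ∈ S ∧ ¬(e.2 ∈ Tb)).card : ℝ) := by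
      have hring : (t:ℝ)*((S.card:ℝ) + ((m:ℝ) - Tb.card) - m) = t*S.card - t*Tb.card := by ring
      linarith [hcut, hring.symm.le, hring.le]
    have hcastTb : ((∑ b ∈ Tb, (indegD H b - t) : ℕ) : ℝ) =
        (∑ b ∈ Tb, (indegD H b : ℝ)) - t * Tb.card := by
      rw [Nat.cast_sum,
        Finset.sum_congr rfl (fun b hb => Nat.cast_sub (htin b (hTbB hb))),
        Finset.sum_sub_distrib, Finset.sum_const, nsmul_eq_mul, mul_comm]
    have hcastS : ((∑ a ∈ S, (outdegD H a - t) : ℕ) : ℝ) =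
        (∑ a ∈ S, (outdegD H a : ℝ)) - t * S.card := by
      rw [Nat.cast_sum,
        Finset.sum_congr rfl (fun a ha => Nat.cast_sub (htout a (hSA ha))),
        Finset.sum_sub_distrib, Finset.sum_const, nsmul_eq_mul, mul_comm]
    have hgoalR : (s'.card : ℝ) ≤ ((s'.biUnion tfun).card : ℝ) := by
      have e1 : (s'.card : ℝ) = P.card + Dp.card := by exact_mod_cast hs'card2
      have e2 : (Dp.card : ℝ) ≤ (∑ b ∈ Tb, (indegD H b : ℝ)) - t * Tb.card := by
        rw [← hcastTb]
        exact_mod_cast hDple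
      have e3 : ((P ∪ ET).card : ℝ) + ((∑ a ∈ S, (outdegD H a : ℝ)) - t * S.card)
          ≤ ((s'.biUnion tfun).card : ℝ) := by
        rw [← hcastS]
        exact_mod_cast hNNcard ▸ hNle
      have e4 : (P.card : ℝ) + ET.card ≤ ((P ∪ ET).card : ℝ) +
          ((H.filter fun e => e.1 ∈ S ∧ e.2 ∈ Tb).card : ℝ) := by
        have := hUI
        have hIc : ((P ∩ ET).card : ℝ) ≤
            ((H.filter fun e => e.1 ∈ S ∧ e.2 ∈ Tb).card : ℝ) := by exact_mod_cast hI
        have hUIc : ((P ∪ ET).card : ℝ) + (P ∩ ET).card = (P.card : ℝ) + ET.card := by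
          exact_mod_cast hUI
        linarith
      have e5 : (ET.card : ℝ) = ∑ b ∈ Tb, (indegD H b : ℝ) := by
        rw [hETsum]; push_cast; rfl
      have e6 : (∑ a ∈ S, (outdegD H a : ℝ)) =
          ((H.filter fun e => e.1 ∈ S ∧ e.2 ∈ Tb).card : ℝ) +
          ((H.filter fun e => e.1 ∈ S ∧ ¬(e.2 ∈ Tb)).card : ℝ) := by
        have : ((H.filter fun e => e.1 ∈ S).card : ℝ) = (∑ a ∈ S, (outdegD H a : ℝ)) := by
          rw [hsumS]; push_cast; rfl
        rw [← this]
        exact_mod_cast hsplitS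
      linarith
    exact_mod_cast hgoalR
  -- apply Hall's theorem
  obtain ⟨f, hfinj, hf⟩ :=
    (Finset.all_card_le_biUnion_card_iff_existsInjective'
      (fun x : {x // x ∈ LF} => tfun x.1)).mp hall
  -- totalize
  set F : W → W := fun w => if h : w ∈ LF then f ⟨w, h⟩ else w with hF
  have hFmem : ∀ w, ∀ h : w ∈ LF, F w = f ⟨w, h⟩ := by
    intro w h
    simp [hF, dif_pos h]
  have hFtf : ∀ w, w ∈ LF → F w ∈ tfun w := by
    intro w h
    rw [hFmem w h]
    exact hf ⟨w, h⟩
  have hFinj : ∀ w₁ ∈ LF, ∀ w₂ ∈ LF, F w₁ = F w₂ → w₁ = w₂ := by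
    intro w₁ h₁ w₂ h₂ h
    rw [hFmem w₁ h₁, hFmem w₂ h₂] at h
    exact congrArg Subtype.val (hfinj h)
  -- tfun maps LF into RF
  have htfsub : ∀ w ∈ LF, tfun w ⊆ RF := by
    intro w hw
    rcases w with e | p
    · have he : e ∈ H := (hLFinl e).mp hw
      intro u hu
      simp only [htfun, Sum.elim_inl, mem_union, mem_image, mem_range] at hu
      rcases hu with hu | ⟨j, hj, rfl⟩
      · simp only [mem_singleton] at hu
        subst hu
        exact (hRFinl e).mpr he
      · exact (hRFinr e.1 j).mpr ⟨(hends e he).1, hj⟩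
    · intro u hu
      simp only [htfun, Sum.elim_inr, mem_image] at hu
      obtain ⟨e, he, rfl⟩ := hu
      exact (hRFinl e).mpr (mem_filter.mp he).1
  have himgsub : LF.image F ⊆ RF := by
    intro u hu
    simp only [mem_image] at hu
    obtain ⟨w, hw, rfl⟩ := hu
    exact htfsub w hw (hFtf w hw)
  have himgcard : (LF.image F).card = LF.card := by
    apply Finset.card_image_of_injOn
    intro w₁ h₁ w₂ h₂
    exact hFinj w₁ h₁ w₂ h₂
  have himg : LF.image F = RF :=
    Finset.eq_of_subset_of_card_le himgsub (by rw [himgcard, hcards_eq])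
  have hsurj : ∀ r ∈ RF, ∃ w ∈ LF, F w = r := by
    intro r hr
    rw [← himg] at hr
    simpa only [mem_image] using hr
  -- the factor
  set K : Finset (V × V) := H.filter (fun e => F (Sum.inl e) = Sum.inl e) with hK
  have hKH : K ⊆ H := filter_subset _ _
  refine ⟨K, hKH, ?_, ?_⟩
  · -- outdegrees
    intro a ha
    set Sa : Finset (V × V) := H.filter (fun e => e.1 = a) with hSa
    set SaBad : Finset (V × V) := Sa.filter (fun e => ¬ (F (Sum.inl e) = Sum.inl e)) with hSaBad
    set Da : Finset W := (Finset.range (outdegD H a - t)).image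
      (fun j => (Sum.inr (a, j) : W)) with hDa
    have hDaRF : Da ⊆ RF := by
      intro u hu
      simp only [hDa, mem_image, mem_range] at hu
      obtain ⟨j, hj, rfl⟩ := hu
      exact (hRFinr a j).mpr ⟨ha, hj⟩
    have himgBad : SaBad.image (fun e => F (Sum.inl e)) = Da := by
      apply Finset.eq_of_subset_of_card_le
      · intro u hu
        simp only [mem_image] at hu
        obtain ⟨e, he, rfl⟩ := hu
        have he1 := mem_filter.mp he
        have heH : e ∈ H := (mem_filter.mp he1.1).1
        have hea : e.1 = a := (mem_filter.mp he1.1).2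
        have := hFtf (Sum.inl e) ((hLFinl e).mpr heH)
        simp only [htfun, Sum.elim_inl, mem_union, mem_singleton] at this
        rcases this with h | h
        · exact absurd h he1.2
        · rw [hDa, ← hea]
          exact h
      · have hsub : Da ⊆ SaBad.image (fun e => F (Sum.inl e)) := by
          intro d hd
          obtain ⟨w, hwLF, hwd⟩ := hsurj d (hDaRF hd)
          simp only [hDa, mem_image, mem_range] at hd
          obtain ⟨j, hj, rfl⟩ := hd
          rcases w with e | p
          · have heH : e ∈ H := (hLFinl e).mp hwLF
            have := hFtf (Sum.inl e) hwLF
            rw [hwd] at this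
            simp only [htfun, Sum.elim_inl, mem_union, mem_singleton, mem_image,
              mem_range] at this
            rcases this with h | ⟨j', -, h⟩
            · exact absurd h (by simp)
            · injection h with hp
              have hea : e.1 = a := congrArg Prod.fst hp
              refine mem_image.mpr ⟨e, ?_, hwd⟩
              refine mem_filter.mpr ⟨mem_filter.mpr ⟨heH, hea⟩, ?_⟩
              intro hcon
              rw [hcon] at hwd
              exact absurd hwd (by simp)
          · have := hFtf (Sum.inr p) hwLF
            rw [hwd] at this
            simp only [htfun, Sum.elim_inr, mem_image] at this
            obtain ⟨e, -, h⟩ := this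
            exact absurd h (by simp)
        exact card_le_card hsub
    have hBadcard : SaBad.card = outdegD H a - t := by
      have hinj2 : Set.InjOn (fun e => F (Sum.inl e)) SaBad := by
        intro e₁ h₁ e₂ h₂ h
        have he₁ : (e₁ : V × V) ∈ H := (mem_filter.mp (mem_filter.mp h₁).1).1
        have he₂ : (e₂ : V × V) ∈ H := (mem_filter.mp (mem_filter.mp h₂).1).1
        have := hFinj (Sum.inl e₁) ((hLFinl e₁).mpr he₁) (Sum.inl e₂) ((hLFinl e₂).mpr he₂) h
        exact Sum.inl_injective this
      have hc := Finset.card_image_of_injOn hinj2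
      rw [himgBad] at hc
      rw [← hc, hDa, Finset.card_image_of_injective _ (hinjr a), Finset.card_range]
    have hsplitSa : (Sa.filter (fun e => F (Sum.inl e) = Sum.inl e)).card + SaBad.card
        = Sa.card := by
      rw [hSaBad]
      exact Finset.card_filter_add_card_filter_not _
    have hKa : (K.filter fun e => e.1 = a) = Sa.filter (fun e => F (Sum.inl e) = Sum.inl e) := by
      rw [hK, hSa, Finset.filter_filter, Finset.filter_filter]
      apply filter_congr
      intro e _
      exact and_comm
    have hSacard : Sa.card = outdegD H a := rfl
    have htle : t ≤ outdegD H a := htout a ha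
    unfold outdegD
    rw [hKa]
    omega
  · -- indegrees
    intro b hb
    set Ib : Finset (V × V) := H.filter (fun e => e.2 = b) with hIb
    set IbBad : Finset (V × V) := Ib.filter (fun e => ¬ (F (Sum.inl e) = Sum.inl e)) with hIbBad
    set Db : Finset W := (Finset.range (indegD H b - t)).image
      (fun j => (Sum.inr (b, j) : W)) with hDb
    have hDbLF : Db ⊆ LF := by
      intro u hu
      simp only [hDb, mem_image, mem_range] at hu
      obtain ⟨j, hj, rfl⟩ := hu
      exact (hLFinr b j).mpr ⟨hb, hj⟩
    have himgDb : Db.image F = IbBad.image Sum.inl := by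
      apply Finset.eq_of_subset_of_card_le
      · intro u hu
        simp only [mem_image] at hu
        obtain ⟨d, hd, rfl⟩ := hu
        have hdLF := hDbLF hd
        have htf := hFtf d hdLF
        simp only [hDb, mem_image, mem_range] at hd
        obtain ⟨j, hj, rfl⟩ := hd
        simp only [htfun, Sum.elim_inr, mem_image] at htf
        obtain ⟨e, he, hFe⟩ := htf
        have heH : e ∈ H := (mem_filter.mp he).1
        have heb : e.2 = b := (mem_filter.mp he).2
        refine mem_image.mpr ⟨e, ?_, hFe⟩
        refine mem_filter.mpr ⟨mem_filter.mpr ⟨heH, heb⟩, ?_⟩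
        intro hcon
        have heq : (Sum.inr (b, j) : W) = Sum.inl e := by
          apply hFinj _ ((hLFinr b j).mpr ⟨hb, hj⟩) _ ((hLFinl e).mpr heH)
          rw [hcon, hFe]
        exact absurd heq (by simp)
      · have hsub2 : IbBad.image Sum.inl ⊆ Db.image F := by
          intro u hu
          simp only [mem_image] at hu
          obtain ⟨e, he, rfl⟩ := hu
          have heIb := (mem_filter.mp he).1
          have hbad := (mem_filter.mp he).2
          have heH : e ∈ H := (mem_filter.mp heIb).1
          have heb : e.2 = b := (mem_filter.mp heIb).2
          obtain ⟨w, hwLF, hwe⟩ := hsurj (Sum.inl e) ((hRFinl e).mpr heH)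
          rcases w with e' | p
          · have := hFtf (Sum.inl e') hwLF
            rw [hwe] at this
            simp only [htfun, Sum.elim_inl, mem_union, mem_singleton, mem_image,
              mem_range] at this
            rcases this with h | ⟨j', -, h⟩
            · have h2 : e' = e := Sum.inl_injective h.symm
              subst h2
              exact absurd hwe hbad
            · exact absurd h (by simp)
          · obtain ⟨b', j⟩ := p
            have htf := hFtf (Sum.inr (b', j)) hwLF
            rw [hwe] at htf
            simp only [htfun, Sum.elim_inr, mem_image] at htf
            obtain ⟨e'', he'', h⟩ := htf
            have he''2 : e'' = e := Sum.inl_injective h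
            subst he''2
            have hb'b : b' = b := ((mem_filter.mp he'').2).symm.trans heb
            subst hb'b
            have hjlt : j < indegD H b' - t := ((hLFinr b' j).mp hwLF).2
            refine mem_image.mpr ⟨Sum.inr (b', j), ?_, hwe⟩
            simp only [hDb, mem_image, mem_range]
            exact ⟨j, hjlt, rfl⟩
        exact card_le_card hsub2
    have hBadcard : IbBad.card = indegD H b - t := by
      have h1 : (Db.image F).card = Db.card := by
        apply Finset.card_image_of_injOn
        intro w₁ h₁ w₂ h₂ h
        exact hFinj w₁ (hDbLF h₁) w₂ (hDbLF h₂) h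
      have h2 : (IbBad.image (Sum.inl : V × V → W)).card = IbBad.card :=
        Finset.card_image_of_injective _ (Sum.inl_injective : Function.Injective (Sum.inl : V × V → W))
      have h3 : Db.card = indegD H b - t := by
        rw [hDb, Finset.card_image_of_injective _ (hinjr b), Finset.card_range]
      rw [← h2, ← himgDb, h1, h3]
    have hsplitIb : (Ib.filter (fun e => F (Sum.inl e) = Sum.inl e)).card + IbBad.card
        = Ib.card := by
      rw [hIbBad]
      exact Finset.card_filter_add_card_filter_not _
    have hKb : (K.filter fun e => e.2 = b) = Ib.filter (fun e => F (Sum.inl e) = Sum.inl e) := by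
      rw [hK, hIb, Finset.filter_filter, Finset.filter_filter]
      apply filter_congr
      intro e _
      exact and_comm
    have htle : t ≤ indegD H b := htin b hb
    have hIbcard : Ib.card = indegD H b := rfl
    unfold indegD
    rw [hKb]
    omega


lemma factor_decomp (t : ℕ) : ∀ (K : Finset (V × V)) (A B : Finset V),
    A.card = B.card →
    (∀ e ∈ K, e.1 ∈ A ∧ e.2 ∈ B) →
    (∀ a ∈ A, outdegD K a = t) → (∀ b ∈ B, indegD K b = t) →
    ∃ N : Fin t → Finset (V × V), (∀ j, N j ⊆ K ∧ matchingProp (N j) A B) ∧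
      (∀ j j', j ≠ j' → Disjoint (N j) (N j')) := by
  induction t with
  | zero =>
    intro K A B _ _ _ _
    exact ⟨fun j => j.elim0, fun j => j.elim0, fun j j' _ => j.elim0⟩
  | succ t ih =>
    intro K A B hcard hends hout hin
    -- Hall condition
    have hall : ∀ S ⊆ A, S.card ≤ (S.biUnion (nbO K B)).card := by
      intro S hS
      have h1 : (K.filter fun e => e.1 ∈ S).card = (t+1) * S.card := by
        rw [sum_out_filter]
        rw [Finset.sum_congr rfl (fun a ha => hout a (hS ha)), Finset.sum_const, smul_eq_mul,
          mul_comm]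
      have hsub : (K.filter fun e => e.1 ∈ S) ⊆
          (K.filter fun e => e.2 ∈ S.biUnion (nbO K B)) := by
        intro e he
        obtain ⟨heK, heS⟩ := mem_filter.mp he
        refine mem_filter.mpr ⟨heK, mem_biUnion.mpr ⟨e.1, heS, ?_⟩⟩
        simp only [nbO, mem_image, mem_filter]
        exact ⟨e, ⟨heK, rfl, (hends e heK).2⟩, rfl⟩
      have h2 : (K.filter fun e => e.2 ∈ S.biUnion (nbO K B)).card ≤
          (t+1) * (S.biUnion (nbO K B)).card := by
        rw [sum_in_filter]
        calc ∑ b ∈ S.biUnion (nbO K B), indegD K b ≤ ∑ _b ∈ S.biUnion (nbO K B), (t+1) := by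
              apply Finset.sum_le_sum
              intro b hb
              have hbB : b ∈ B := by
                obtain ⟨a, -, hba⟩ := mem_biUnion.mp hb
                exact nbO_subset K B a hba
              exact le_of_eq (hin b hbB)
          _ = (t+1) * (S.biUnion (nbO K B)).card := by
              rw [Finset.sum_const, smul_eq_mul, mul_comm]
      have := (h1 ▸ (card_le_card hsub)).trans h2
      exact Nat.le_of_mul_le_mul_left this (Nat.succ_pos t)
    obtain ⟨M, hMK, hMmatch⟩ := exists_matching K A B hcard hall
    set K' : Finset (V × V) := K \ M with hK'
    have hK'filter : ∀ p : V × V → Prop, ∀ _ : DecidablePred p,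
        K'.filter p = K.filter p \ M.filter p := by
      intro p _
      ext e
      simp only [hK', mem_filter, mem_sdiff]
      tauto
    have hends' : ∀ e ∈ K', e.1 ∈ A ∧ e.2 ∈ B := fun e he => hends e (mem_sdiff.mp he).1
    have hout' : ∀ a ∈ A, outdegD K' a = t := by
      intro a ha
      unfold outdegD
      rw [hK'filter _ _, card_sdiff_of_subset (filter_subset_filter _ hMK)]
      have h1 : (K.filter fun e => e.1 = a).card = t + 1 := hout a ha
      have h2 : (M.filter fun e => e.1 = a).card = 1 := by
        have := hMmatch.1 a
        rw [if_pos ha] at this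
        exact this
      omega
    have hin' : ∀ b ∈ B, indegD K' b = t := by
      intro b hb
      unfold indegD
      rw [hK'filter _ _, card_sdiff_of_subset (filter_subset_filter _ hMK)]
      have h1 : (K.filter fun e => e.2 = b).card = t + 1 := hin b hb
      have h2 : (M.filter fun e => e.2 = b).card = 1 := by
        have := hMmatch.2.1 b
        rw [if_pos hb] at this
        exact this
      omega
    obtain ⟨N', hN'prop, hN'disj⟩ := ih K' A B hcard hends' hout' hin'
    refine ⟨Fin.cases M N', ?_, ?_⟩
    · intro j
      rcases Fin.eq_zero_or_eq_succ j with rfl | ⟨j0, rfl⟩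
      · simp only [Fin.cases_zero]
        exact ⟨hMK, hMmatch⟩
      · simp only [Fin.cases_succ]
        exact ⟨(hN'prop j0).1.trans sdiff_subset, (hN'prop j0).2⟩
    · intro j j' hjj'
      have hdisjMN : ∀ j0, Disjoint M (N' j0) := by
        intro j0
        rw [Finset.disjoint_left]
        intro e heM heN
        exact (mem_sdiff.mp ((hN'prop j0).1 heN)).2 heM
      rcases Fin.eq_zero_or_eq_succ j with rfl | ⟨j0, rfl⟩
      · rcases Fin.eq_zero_or_eq_succ j' with rfl | ⟨j0', rfl⟩
        · exact absurd rfl hjj'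
        · simp only [Fin.cases_zero, Fin.cases_succ]
          exact hdisjMN j0'
      · rcases Fin.eq_zero_or_eq_succ j' with rfl | ⟨j0', rfl⟩
        · simp only [Fin.cases_zero, Fin.cases_succ]
          exact (hdisjMN j0).symm
        · simp only [Fin.cases_succ]
          exact hN'disj j0 j0' (fun h => hjj' (by rw [h]))


-- small helpers
lemma filter_sdiff_card {H U : Finset (V × V)} (hU : U ⊆ H) (p : V × V → Prop)
    [DecidablePred p] :
    ((H \ U).filter p).card = (H.filter p).card - (U.filter p).card := by
  have h1 : (H \ U).filter p = H.filter p \ U.filter p := by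
    ext e
    simp only [mem_filter, mem_sdiff]
    tauto
  rw [h1, card_sdiff_of_subset (filter_subset_filter _ hU)]

lemma outdeg_union_le (X Y : Finset (V × V)) (v : V) :
    outdegD (X ∪ Y) v ≤ outdegD X v + outdegD Y v := by
  unfold outdegD
  rw [filter_union]
  exact card_union_le _ _

lemma indeg_union_le (X Y : Finset (V × V)) (v : V) :
    indegD (X ∪ Y) v ≤ indegD X v + indegD Y v := by
  unfold indegD
  rw [filter_union]
  exact card_union_le _ _

lemma outdeg_biUnion_le {ι : Type*} [DecidableEq ι] (Sb : Finset ι)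
    (Mb : ι → Finset (V × V)) (v : V) :
    outdegD (Sb.biUnion Mb) v ≤ ∑ s ∈ Sb, outdegD (Mb s) v := by
  unfold outdegD
  rw [filter_biUnion]
  exact card_biUnion_le
lemma indeg_biUnion_le {ι : Type*} [DecidableEq ι] (Sb : Finset ι)
    (Mb : ι → Finset (V × V)) (v : V) :
    indegD (Sb.biUnion Mb) v ≤ ∑ s ∈ Sb, indegD (Mb s) v := by
  unfold indegD
  rw [filter_biUnion]
  exact card_biUnion_le

lemma outdeg_into (H : Finset (V × V)) (B T : Finset V) (hT : T ⊆ B)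
    (hheads : ∀ e ∈ H, e.2 ∈ B) (a : V) :
    outdegD H a ≤ (H.filter fun e => e.1 = a ∧ e.2 ∈ T).card + (B \ T).card := by
  have hsplit : (H.filter fun e => e.1 = a).card =
      (H.filter fun e => (e.1 = a) ∧ e.2 ∈ T).card +
      (H.filter fun e => (e.1 = a) ∧ ¬(e.2 ∈ T)).card := by
    rw [← Finset.filter_filter, ← Finset.filter_filter]
    exact (Finset.card_filter_add_card_filter_not (p := fun e : V × V => e.2 ∈ T)).symm
  have hbound : (H.filter fun e => (e.1 = a) ∧ ¬(e.2 ∈ T)).card ≤ (B \ T).card := by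
    apply Finset.card_le_card_of_injOn Prod.snd
    · intro e he
      simp only [mem_coe, mem_filter] at he
      exact mem_sdiff.mpr ⟨hheads e he.1, he.2.2⟩
    · intro e he f hf hef
      simp only [coe_filter, Set.mem_setOf_eq] at he hf
      exact Prod.ext (he.2.1.trans hf.2.1.symm) hef
  calc outdegD H a = _ := hsplit
    _ ≤ _ := by omega

lemma indeg_into (H : Finset (V × V)) (A T : Finset V) (hT : T ⊆ A)
    (htails : ∀ e ∈ H, e.1 ∈ A) (b : V) :
    indegD H b ≤ (H.filter fun e => e.2 = b ∧ e.1 ∈ T).card + (A \ T).card := by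
  have hsplit : (H.filter fun e => e.2 = b).card =
      (H.filter fun e => (e.2 = b) ∧ e.1 ∈ T).card +
      (H.filter fun e => (e.2 = b) ∧ ¬(e.1 ∈ T)).card := by
    rw [← Finset.filter_filter, ← Finset.filter_filter]
    exact (Finset.card_filter_add_card_filter_not (p := fun e : V × V => e.1 ∈ T)).symm
  have hbound : (H.filter fun e => (e.2 = b) ∧ ¬(e.1 ∈ T)).card ≤ (A \ T).card := by
    apply Finset.card_le_card_of_injOn Prod.fst
    · intro e he
      simp only [mem_coe, mem_filter] at he
      exact mem_sdiff.mpr ⟨htails e he.1, he.2.2⟩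
    · intro e he f hf hef
      simp only [coe_filter, Set.mem_setOf_eq] at he hf
      exact Prod.ext hef (he.2.1.trans hf.2.1.symm)
  calc indegD H b = _ := hsplit
    _ ≤ _ := by omega

lemma busy_phase (H : Finset (V × V)) (A B : Finset V) (m : ℕ) (μ ε : ℝ) (q : ℕ)
    (As Bs : Fin q → Finset V)
    (hA : A.card = m) (hB : B.card = m)
    (hends : ∀ e ∈ H, e.1 ∈ A ∧ e.2 ∈ B)
    (hout : ∀ a ∈ A, (1-μ-ε)*m ≤ (outdegD H a : ℝ))
    (hin : ∀ b ∈ B, (1-μ-ε)*m ≤ (indegD H b : ℝ))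
    (hAs : ∀ s, As s ⊆ A) (hBs : ∀ s, Bs s ⊆ B)
    (hcards : ∀ s, (As s).card = (Bs s).card)
    (hdefA : ∀ s, ((A \ As s).card : ℝ) ≤ ε*m)
    (hdefB : ∀ s, ((B \ Bs s).card : ℝ) ≤ ε*m) :
    ∀ Sb : Finset (Fin q),
    (m:ℝ) ≤ 2*((1-μ-ε)*m - ε*m - Sb.card) →
    ∃ Mb : Fin q → Finset (V × V),
      (∀ s, Mb s ⊆ H) ∧
      (∀ s ∈ Sb, matchingProp (Mb s) (As s) (Bs s)) ∧
      (∀ s ∉ Sb, Mb s = ∅) ∧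
      (∀ s s', s ≠ s' → Disjoint (Mb s) (Mb s')) ∧
      (∀ v, outdegD (Sb.biUnion Mb) v ≤ Sb.card) ∧
      (∀ v, indegD (Sb.biUnion Mb) v ≤ Sb.card) := by
  intro Sb
  induction Sb using Finset.induction_on with
  | empty =>
    intro _
    refine ⟨fun _ => ∅, fun s => empty_subset _, fun s hs => absurd hs (notMem_empty s),
      fun s _ => rfl, fun s s' _ => by simp, ?_, ?_⟩ <;>
      · intro v
        simp [outdegD, indegD]
  | @insert s₀ Sb hs₀ ih =>
    intro hmargin
    have hcardIns : ((insert s₀ Sb).card : ℝ) = (Sb.card : ℝ) + 1 := by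
      rw [card_insert_of_notMem hs₀]
      push_cast
      ring
    have hmargin' : (m:ℝ) ≤ 2*((1-μ-ε)*m - ε*m - Sb.card) := by
      rw [hcardIns] at hmargin
      linarith
    obtain ⟨Mb, hMbH, hMbmatch, hMbempty, hMbdisj, hMbout, hMbin⟩ := ih hmargin'
    set U := Sb.biUnion Mb with hU
    have hUH : U ⊆ H := biUnion_subset.mpr (fun s _ => hMbH s)
    set H' := H \ U with hH'
    -- Hall degree bounds in H'
    have hdegA : ∀ a ∈ As s₀, (1-μ-ε)*m - ε*m - Sb.card ≤
        ((H'.filter fun e => e.1 = a ∧ e.2 ∈ Bs s₀).card : ℝ) := by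
      intro a ha
      have h1 := outdeg_into H B (Bs s₀) (hBs s₀) (fun e he => (hends e he).2) a
      have h3 : (U.filter fun e => e.1 = a ∧ e.2 ∈ Bs s₀).card ≤ Sb.card := by
        calc (U.filter fun e => e.1 = a ∧ e.2 ∈ Bs s₀).card
            ≤ (U.filter fun e => e.1 = a).card :=
              card_le_card (monotone_filter_right _ (fun e _ h => h.1))
          _ = outdegD U a := rfl
          _ ≤ ∑ s ∈ Sb, outdegD (Mb s) a := outdeg_biUnion_le Sb Mb a
          _ ≤ ∑ _s ∈ Sb, 1 := Finset.sum_le_sum fun s hsSb => by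
              rw [(hMbmatch s hsSb).1 a]
              split_ifs <;> omega
          _ = Sb.card := by rw [Finset.sum_const, smul_eq_mul, mul_one]
      have hsub : (U.filter fun e => e.1 = a ∧ e.2 ∈ Bs s₀).card ≤
          (H.filter fun e => e.1 = a ∧ e.2 ∈ Bs s₀).card :=
        card_le_card (filter_subset_filter _ hUH)
      have h2 : ((H'.filter fun e => e.1 = a ∧ e.2 ∈ Bs s₀).card : ℝ) =
          ((H.filter fun e => e.1 = a ∧ e.2 ∈ Bs s₀).card : ℝ) -
          ((U.filter fun e => e.1 = a ∧ e.2 ∈ Bs s₀).card : ℝ) := by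
        rw [hH', filter_sdiff_card hUH, Nat.cast_sub hsub]
      have hw : (1-μ-ε)*m ≤ (outdegD H a : ℝ) := hout a (hAs s₀ ha)
      have hd : ((B \ Bs s₀).card : ℝ) ≤ ε*m := hdefB s₀
      have h1' : (outdegD H a : ℝ) ≤ ((H.filter fun e => e.1 = a ∧ e.2 ∈ Bs s₀).card : ℝ) +
          ((B \ Bs s₀).card : ℝ) := by exact_mod_cast h1
      have h3' : ((U.filter fun e => e.1 = a ∧ e.2 ∈ Bs s₀).card : ℝ) ≤ (Sb.card : ℝ) := by
        exact_mod_cast h3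
      linarith
    have hdegB : ∀ b ∈ Bs s₀, (1-μ-ε)*m - ε*m - Sb.card ≤
        ((H'.filter fun e => e.2 = b ∧ e.1 ∈ As s₀).card : ℝ) := by
      intro b hb
      have h1 := indeg_into H A (As s₀) (hAs s₀) (fun e he => (hends e he).1) b
      have h3 : (U.filter fun e => e.2 = b ∧ e.1 ∈ As s₀).card ≤ Sb.card := by
        calc (U.filter fun e => e.2 = b ∧ e.1 ∈ As s₀).card
            ≤ (U.filter fun e => e.2 = b).card :=
              card_le_card (monotone_filter_right _ (fun e _ h => h.1))
          _ = indegD U b := rfl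
          _ ≤ ∑ s ∈ Sb, indegD (Mb s) b := indeg_biUnion_le Sb Mb b
          _ ≤ ∑ _s ∈ Sb, 1 := Finset.sum_le_sum fun s hsSb => by
              rw [(hMbmatch s hsSb).2.1 b]
              split_ifs <;> omega
          _ = Sb.card := by rw [Finset.sum_const, smul_eq_mul, mul_one]
      have hsub : (U.filter fun e => e.2 = b ∧ e.1 ∈ As s₀).card ≤
          (H.filter fun e => e.2 = b ∧ e.1 ∈ As s₀).card :=
        card_le_card (filter_subset_filter _ hUH)
      have h2 : ((H'.filter fun e => e.2 = b ∧ e.1 ∈ As s₀).card : ℝ) =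
          ((H.filter fun e => e.2 = b ∧ e.1 ∈ As s₀).card : ℝ) -
          ((U.filter fun e => e.2 = b ∧ e.1 ∈ As s₀).card : ℝ) := by
        rw [hH', filter_sdiff_card hUH, Nat.cast_sub hsub]
      have hw : (1-μ-ε)*m ≤ (indegD H b : ℝ) := hin b (hBs s₀ hb)
      have hd : ((A \ As s₀).card : ℝ) ≤ ε*m := hdefA s₀
      have h1' : (indegD H b : ℝ) ≤ ((H.filter fun e => e.2 = b ∧ e.1 ∈ As s₀).card : ℝ) +
          ((A \ As s₀).card : ℝ) := by exact_mod_cast h1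
      have h3' : ((U.filter fun e => e.2 = b ∧ e.1 ∈ As s₀).card : ℝ) ≤ (Sb.card : ℝ) := by
        exact_mod_cast h3
      linarith
    have hsum : ((As s₀).card : ℝ) ≤ ((1-μ-ε)*m - ε*m - Sb.card) +
        ((1-μ-ε)*m - ε*m - Sb.card) := by
      have hAsm : ((As s₀).card : ℝ) ≤ (m:ℝ) := by
        exact_mod_cast hA ▸ card_le_card (hAs s₀)
      rw [hcardIns] at hmargin
      linarith
    have hallc := hall_cond_of_degrees (V := V) H' (As s₀) (Bs s₀)
      ((1-μ-ε)*(m:ℝ) - ε*(m:ℝ) - (Sb.card:ℝ)) ((1-μ-ε)*(m:ℝ) - ε*(m:ℝ) - (Sb.card:ℝ))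
      hdegA hdegB hsum (le_of_eq (hcards s₀))
    obtain ⟨M₀, hM₀H', hM₀match⟩ := exists_matching H' (As s₀) (Bs s₀) (hcards s₀) hallc
    -- assemble
    classical
    set Mb' : Fin q → Finset (V × V) := Function.update Mb s₀ M₀ with hMb'
    have hMb'q : Mb' s₀ = M₀ := Function.update_self _ _ _
    have hMb'ne : ∀ s, s ≠ s₀ → Mb' s = Mb s := fun s hs => Function.update_of_ne hs _ _
    have hbiU : (insert s₀ Sb).biUnion Mb' = M₀ ∪ U := by
      rw [Finset.biUnion_insert, hMb'q, hU]
      congr 1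
      apply Finset.biUnion_congr rfl
      intro s hsSb
      exact hMb'ne s (fun h => hs₀ (h ▸ hsSb))
    have hM₀U : Disjoint M₀ U := by
      rw [Finset.disjoint_left]
      intro e he hU'
      exact (mem_sdiff.mp (hM₀H' he)).2 hU'
    refine ⟨Mb', ?_, ?_, ?_, ?_, ?_, ?_⟩
    · intro s
      by_cases hss : s = s₀
      · rw [hss, hMb'q]
        exact hM₀H'.trans sdiff_subset
      · rw [hMb'ne s hss]
        exact hMbH s
    · intro s hs
      rcases mem_insert.mp hs with rfl | hsSb
      · rw [hMb'q]
        exact hM₀match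
      · rw [hMb'ne s (fun h => hs₀ (h ▸ hsSb))]
        exact hMbmatch s hsSb
    · intro s hs
      have hss : s ≠ s₀ := fun h => hs (h ▸ mem_insert_self s₀ Sb)
      rw [hMb'ne s hss]
      exact hMbempty s (fun h => hs (mem_insert_of_mem h))
    · intro s s' hss'
      by_cases h1 : s = s₀
      · subst h1
        rw [hMb'q, hMb'ne s' hss'.symm]
        by_cases h2 : s' ∈ Sb
        · exact Finset.disjoint_of_subset_right (subset_biUnion_of_mem Mb h2) hM₀U
        · rw [hMbempty s' h2]
          simp
      · by_cases h2 : s' = s₀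
        · subst h2
          rw [hMb'q, hMb'ne s h1]
          by_cases h3 : s ∈ Sb
          · exact (Finset.disjoint_of_subset_right (subset_biUnion_of_mem Mb h3) hM₀U).symm
          · rw [hMbempty s h3]
            simp
        · rw [hMb'ne s h1, hMb'ne s' h2]
          exact hMbdisj s s' hss'
    · intro v
      rw [hbiU, card_insert_of_notMem hs₀]
      calc outdegD (M₀ ∪ U) v ≤ outdegD M₀ v + outdegD U v := outdeg_union_le _ _ _
        _ ≤ 1 + Sb.card := by
            have h1 : outdegD M₀ v ≤ 1 := by
              rw [hM₀match.1 v]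
              split_ifs <;> omega
            exact Nat.add_le_add h1 (hMbout v)
        _ = Sb.card + 1 := by omega
    · intro v
      rw [hbiU, card_insert_of_notMem hs₀]
      calc indegD (M₀ ∪ U) v ≤ indegD M₀ v + indegD U v := indeg_union_le _ _ _
        _ ≤ 1 + Sb.card := by
            have h1 : indegD M₀ v ≤ 1 := by
              rw [hM₀match.2.1 v]
              split_ifs <;> omega
            exact Nat.add_le_add h1 (hMbin v)
        _ = Sb.card + 1 := by omega

lemma per_pair (H : Finset (V × V)) (A B : Finset V) (m q : ℕ) (μ ε ρ : ℝ) (ℓ : ℕ)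
    (As Bs : Fin q → Finset V)
    (hA : A.card = m) (hB : B.card = m)
    (hends : ∀ e ∈ H, e.1 ∈ A ∧ e.2 ∈ B)
    (hout : ∀ a ∈ A, (1-μ-ε)*m ≤ (outdegD H a : ℝ) ∧ (outdegD H a : ℝ) ≤ (1-μ+ε)*m)
    (hin : ∀ b ∈ B, (1-μ-ε)*m ≤ (indegD H b : ℝ) ∧ (indegD H b : ℝ) ≤ (1-μ+ε)*m)
    (hAs : ∀ s, As s ⊆ A) (hBs : ∀ s, Bs s ⊆ B)
    (hcards : ∀ s, (As s).card = (Bs s).card)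
    (hdefA : ∀ s, ((A \ As s).card : ℝ) ≤ ε*m)
    (hdefB : ∀ s, ((B \ Bs s).card : ℝ) ≤ ε*m)
    (hbusy : (((univ : Finset (Fin q)).filter fun s => ¬(As s = A ∧ Bs s = B)).card : ℝ)
      ≤ 2*ℓ*ε*m)
    (hq : (q:ℝ) ≤ (1-μ-ρ)*m) (hμ0 : 0 ≤ μ) (hμ : μ ≤ 1/4) (hε : 0 < ε)
    (hεb : ε*(4*ℓ+4) ≤ ρ^2/100) (hρ : 0 < ρ) (hρ' : ρ ≤ 1/100) (hℓ : 1 ≤ ℓ) :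
    ∃ M : Fin q → Finset (V × V), (∀ s, M s ⊆ H ∧ matchingProp (M s) (As s) (Bs s)) ∧
      (∀ s s', s ≠ s' → Disjoint (M s) (M s')) := by
  classical
  have hm0 : (0:ℝ) ≤ m := Nat.cast_nonneg m
  have hεnn : (0:ℝ) ≤ ε := le_of_lt hε
  have hℓ0 : (0:ℝ) ≤ (ℓ:ℝ) := Nat.cast_nonneg ℓ
  have hεm : (0:ℝ) ≤ ε*m := mul_nonneg hεnn hm0
  have hεℓm : (0:ℝ) ≤ ε*ℓ*m := mul_nonneg (mul_nonneg hεnn hℓ0) hm0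
  have hμm : μ*m ≤ (1/4)*m := mul_le_mul_of_nonneg_right hμ hm0
  have hμm0 : (0:ℝ) ≤ μ*m := mul_nonneg hμ0 hm0
  have hεbm : ε*(4*ℓ+4)*m ≤ (ρ^2/100)*m := mul_le_mul_of_nonneg_right hεb hm0
  have hρ1 : ρ^2 ≤ ρ := by nlinarith
  have hρm2 : (ρ^2/100)*m ≤ (ρ/100)*m := by
    apply mul_le_mul_of_nonneg_right _ hm0
    linarith
  set busy : Finset (Fin q) := univ.filter (fun s => ¬(As s = A ∧ Bs s = B)) with hbusydef
  have hbusycard : (busy.card : ℝ) ≤ 2*ℓ*ε*m := hbusy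
  -- busy phase
  have hmargin : (m:ℝ) ≤ 2*((1-μ-ε)*m - ε*m - busy.card) := by
    nlinarith [hbusycard, hμm, hεbm, hρm2, hεm, hεℓm]
  obtain ⟨Mb, hMbH, hMbmatch, hMbempty, hMbdisj, hMbout, hMbin⟩ :=
    busy_phase H A B m μ ε q As Bs hA hB hends (fun a ha => (hout a ha).1)
      (fun b hb => (hin b hb).1) hAs hBs hcards hdefA hdefB busy hmargin
  set Ub := busy.biUnion Mb with hUb
  have hUbH : Ub ⊆ H := biUnion_subset.mpr (fun s _ => hMbH s)
  set H2 := H \ Ub with hH2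
  have hH2H : H2 ⊆ H := sdiff_subset
  have hendsH2 : ∀ e ∈ H2, e.1 ∈ A ∧ e.2 ∈ B := fun e he => hends e (hH2H he)
  -- degree bounds for H2
  have hH2out : ∀ a ∈ A, (1-μ-ε)*m - 2*ℓ*ε*m ≤ (outdegD H2 a : ℝ) ∧
      (outdegD H2 a : ℝ) ≤ (1-μ+ε)*m := by
    intro a ha
    constructor
    · have hsub : (Ub.filter fun e => e.1 = a).card ≤ (H.filter fun e => e.1 = a).card :=
        card_le_card (filter_subset_filter _ hUbH)
      have heq : (outdegD H2 a : ℝ) = (outdegD H a : ℝ) - (outdegD Ub a : ℝ) := by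
        unfold outdegD
        rw [hH2, filter_sdiff_card hUbH, Nat.cast_sub hsub]
      have hUba : ((outdegD Ub a : ℕ) : ℝ) ≤ (busy.card : ℝ) := by
        exact_mod_cast hMbout a
      have := (hout a ha).1
      rw [heq]
      linarith
    · have : outdegD H2 a ≤ outdegD H a := card_le_card (filter_subset_filter _ hH2H)
      calc (outdegD H2 a : ℝ) ≤ (outdegD H a : ℝ) := by exact_mod_cast this
        _ ≤ (1-μ+ε)*m := (hout a ha).2
  have hH2in : ∀ b ∈ B, (1-μ-ε)*m - 2*ℓ*ε*m ≤ (indegD H2 b : ℝ) ∧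
      (indegD H2 b : ℝ) ≤ (1-μ+ε)*m := by
    intro b hb
    constructor
    · have hsub : (Ub.filter fun e => e.2 = b).card ≤ (H.filter fun e => e.2 = b).card :=
        card_le_card (filter_subset_filter _ hUbH)
      have heq : (indegD H2 b : ℝ) = (indegD H b : ℝ) - (indegD Ub b : ℝ) := by
        unfold indegD
        rw [hH2, filter_sdiff_card hUbH, Nat.cast_sub hsub]
      have hUbb : ((indegD Ub b : ℕ) : ℝ) ≤ (busy.card : ℝ) := by
        exact_mod_cast hMbin b
      have := (hin b hb).1
      rw [heq]
      linarith
    · have : indegD H2 b ≤ indegD H b := card_le_card (filter_subset_filter _ hH2H)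
      calc (indegD H2 b : ℝ) ≤ (indegD H b : ℝ) := by exact_mod_cast this
        _ ≤ (1-μ+ε)*m := (hin b hb).2
  -- factor for the non-busy path systems
  set nonbusy : Finset (Fin q) := univ \ busy with hnonbusy
  set t : ℕ := nonbusy.card with htdef
  have htq : (t:ℝ) ≤ (q:ℝ) := by
    have : t ≤ q := by
      calc t ≤ (univ : Finset (Fin q)).card := card_le_card sdiff_subset
        _ = q := by rw [card_univ, Fintype.card_fin]
    exact_mod_cast this
  obtain ⟨K, hKH2, hKout, hKin⟩ := exists_factor H2 A B m
    ((1-μ-ε)*m - 2*ℓ*ε*m) ((1-μ+ε)*m) ρ t hA hB hendsH2 hH2out hH2in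
    (by nlinarith) (by nlinarith) (by nlinarith) (by nlinarith)
    (by nlinarith [htq, hq]) hρ hρ'
  have hendsK : ∀ e ∈ K, e.1 ∈ A ∧ e.2 ∈ B := fun e he => hendsH2 e (hKH2 he)
  obtain ⟨N, hNprop, hNdisj⟩ := factor_decomp t K A B (hA.trans hB.symm) hendsK hKout hKin
  -- assignment
  set embed : {s // s ∈ nonbusy} ≃ Fin t := nonbusy.equivFin with hembed
  set M : Fin q → Finset (V × V) :=
    fun s => if hs : s ∈ nonbusy then N (embed ⟨s, hs⟩) else Mb s with hM
  have hMnb : ∀ s (hs : s ∈ nonbusy), M s = N (embed ⟨s, hs⟩) := by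
    intro s hs
    simp only [hM, dif_pos hs]
  have hMb2 : ∀ s, s ∉ nonbusy → M s = Mb s := by
    intro s hs
    simp only [hM, dif_neg hs]
  have hnb_iff : ∀ s, s ∉ nonbusy ↔ s ∈ busy := by
    intro s
    simp [hnonbusy]
  refine ⟨M, ?_, ?_⟩
  · intro s
    by_cases hs : s ∈ nonbusy
    · rw [hMnb s hs]
      constructor
      · exact ((hNprop _).1.trans hKH2).trans hH2H
      · have hsAB : As s = A ∧ Bs s = B := by
          have : s ∉ busy := fun hcon => (mem_sdiff.mp hs).2 hcon
          rw [hbusydef, mem_filter] at this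
          push_neg at this
          exact this (mem_univ s)
        rw [hsAB.1, hsAB.2]
        exact (hNprop _).2
    · rw [hMb2 s hs]
      exact ⟨hMbH s, hMbmatch s ((hnb_iff s).mp hs)⟩
  · intro s s' hss'
    by_cases hs : s ∈ nonbusy
    · by_cases hs' : s' ∈ nonbusy
      · rw [hMnb s hs, hMnb s' hs']
        apply hNdisj
        intro hcon
        apply hss'
        have := embed.injective hcon
        exact congrArg Subtype.val this
      · rw [hMnb s hs, hMb2 s' hs']
        rw [Finset.disjoint_left]
        intro e he heMb
        have heH2 : e ∈ H2 := hKH2 ((hNprop _).1 he)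
        have heUb : e ∈ Ub := (subset_biUnion_of_mem Mb ((hnb_iff s').mp hs')) heMb
        exact (mem_sdiff.mp heH2).2 heUb
    · by_cases hs' : s' ∈ nonbusy
      · rw [hMb2 s hs, hMnb s' hs']
        rw [Finset.disjoint_left]
        intro e heMb he
        have heH2 : e ∈ H2 := hKH2 ((hNprop _).1 he)
        have heUb : e ∈ Ub := (subset_biUnion_of_mem Mb ((hnb_iff s).mp hs)) heMb
        exact absurd heUb (mem_sdiff.mp heH2).2
      · rw [hMb2 s hs, hMb2 s' hs']
        exact hMbdisj s s' hss'



end AuxLemmas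

/-- Lemma 6.3: extending locally balanced path sequences into directed 1-factors inside a
cyclic system. -/
theorem stmt9 :
    ∃ ρ₀ : ℝ, 0 < ρ₀ ∧ ∀ ρ : ℝ, 0 < ρ → ρ ≤ ρ₀ →
    ∀ ℓ : ℕ, 1 ≤ ℓ →
    ∃ ε₀ : ℝ, 0 < ε₀ ∧ ∀ ε : ℝ, 0 < ε → ε ≤ ε₀ →
    ∀ k : ℕ, 0 < k → (1 : ℝ) / k ≤ ε →
    ∃ m₀ : ℕ, ∀ m : ℕ, m₀ ≤ m →
    ∀ μ : ℝ, 0 ≤ μ → μ ≤ 1/4 →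
    ∀ q : ℕ, (q : ℝ) ≤ (1 - μ - ρ) * m →
    ∀ (V : Type) [inst : DecidableEq V], ∀ (G : Finset (V × V)) (Vc : ZMod k → Finset V),
      -- (G, Q, C) is a (k, m, μ, ε)-cyclic system, with C = V₁ … V_k
      (∀ i j, i ≠ j → Disjoint (Vc i) (Vc j)) →
      (∀ i, (Vc i).card = m) →
      (∀ v : V, ∃ i, v ∈ Vc i) →
      (∀ e ∈ G, ∃ i, e.1 ∈ Vc i ∧ e.2 ∈ Vc (i + 1)) →
      (∀ i, ∀ u ∈ Vc i,
        (1 - μ - ε) * m ≤ ((G.filter fun e => e.1 = u ∧ e.2 ∈ Vc (i + 1)).card : ℝ) ∧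
        ((G.filter fun e => e.1 = u ∧ e.2 ∈ Vc (i + 1)).card : ℝ) ≤ (1 - μ + ε) * m) →
      (∀ i, ∀ w ∈ Vc (i + 1),
        (1 - μ - ε) * m ≤ ((G.filter fun e => e.2 = w ∧ e.1 ∈ Vc i).card : ℝ) ∧
        ((G.filter fun e => e.2 = w ∧ e.1 ∈ Vc i).card : ℝ) ≤ (1 - μ + ε) * m) →
      -- the path sequences
      ∀ PS : Fin q → Finset (V × V),
      (∀ s, IsPathSeq (PS s)) →
      -- (i): each PS_s is locally balanced with respect to C
      (∀ s i, ((PS s).filter fun e => e.1 ∈ Vc i).card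
        = ((PS s).filter fun e => e.2 ∈ Vc (i + 1)).card) →
      -- (ii)
      (∀ s i, ((suppD (PS s) ∩ Vc i).card : ℝ) ≤ ε * m) →
      (∀ i, (((Finset.univ : Finset (Fin q)).filter
          fun s => (suppD (PS s) ∩ Vc i).Nonempty).card : ℝ) ≤ ℓ * m / k) →
      -- conclusion: directed 1-factors
      ∃ F : Fin q → Finset (V × V),
        (∀ s, (∀ v : V, outdegD (F s) v = 1 ∧ indegD (F s) v = 1) ∧
          PS s ⊆ F s ∧ F s \ PS s ⊆ G) ∧
        (∀ s t, s ≠ t → Disjoint (F s \ PS s) (F t \ PS t)) := by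
  classical
  refine ⟨1/100, by norm_num, ?_⟩
  intro ρ hρ hρ' ℓ hℓ
  refine ⟨ρ^2/(400*(ℓ+1)), by positivity, ?_⟩
  intro ε hε hεε₀ k hk h1k
  refine ⟨1, ?_⟩
  intro m hm μ hμ0 hμ q hq V instV G Vc hVcdisj hVccard hVccover hwind hdout hdin
    PS hPS hbal hsupp hmeet
  haveI : NeZero k := ⟨hk.ne'⟩
  have hℓ1 : (1:ℝ) ≤ (ℓ:ℝ) := by exact_mod_cast hℓ
  have hm0 : (0:ℝ) ≤ (m:ℝ) := Nat.cast_nonneg m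
  have hεb : ε*(4*ℓ+4) ≤ ρ^2/100 := by
    have h4 : (0:ℝ) < 4*(ℓ:ℝ)+4 := by linarith
    have hne : ((ℓ:ℝ)+1) ≠ 0 := by linarith
    calc ε*(4*ℓ+4) ≤ (ρ^2/(400*(ℓ+1)))*(4*ℓ+4) :=
          mul_le_mul_of_nonneg_right hεε₀ h4.le
      _ = ρ^2/100 := by field_simp; ring
  -- unique cluster
  have huniq : ∀ v : V, ∀ j j' : ZMod k, v ∈ Vc j → v ∈ Vc j' → j = j' := by
    intro v j j' hj hj'
    by_contra hne
    exact (Finset.disjoint_left.mp (hVcdisj j j' hne)) hj hj'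
  -- the bipartite pieces of G
  set Hc : ZMod k → Finset (V × V) := fun i => G.filter (fun e => e.1 ∈ Vc i) with hHc
  have hHcends : ∀ i, ∀ e ∈ Hc i, e.1 ∈ Vc i ∧ e.2 ∈ Vc (i+1) := by
    intro i e he
    obtain ⟨heG, he1⟩ := mem_filter.mp he
    obtain ⟨j, hj1, hj2⟩ := hwind e heG
    have := huniq e.1 j i hj1 he1
    subst this
    exact ⟨he1, hj2⟩
  have hHcG : ∀ i, Hc i ⊆ G := fun i => filter_subset _ _
  -- degree identifications
  have houtHc : ∀ i, ∀ u ∈ Vc i, ((Hc i).filter fun e => e.1 = u) =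
      (G.filter fun e => e.1 = u ∧ e.2 ∈ Vc (i + 1)) := by
    intro i u hu
    ext e
    simp only [hHc, mem_filter, and_assoc]
    constructor
    · rintro ⟨heG, he1, rfl⟩
      obtain ⟨j, hj1, hj2⟩ := hwind e heG
      have := huniq e.1 j i hj1 he1
      subst this
      exact ⟨heG, rfl, hj2⟩
    · rintro ⟨heG, rfl, h2⟩
      exact ⟨heG, hu, rfl⟩
  have hinHc : ∀ i, ∀ w : V, ((Hc i).filter fun e => e.2 = w) =
      (G.filter fun e => e.2 = w ∧ e.1 ∈ Vc i) := by
    intro i w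
    rw [hHc, Finset.filter_filter]
    apply filter_congr
    intro e _
    exact and_comm
  -- the sets to match
  set Asf : ZMod k → Fin q → Finset V :=
    fun i s => (Vc i).filter (fun v => outdegD (PS s) v = 0) with hAsf
  set Bsf : ZMod k → Fin q → Finset V :=
    fun i s => (Vc (i+1)).filter (fun v => indegD (PS s) v = 0) with hBsf
  -- cardinalities of the deficiency sets
  have houtcnt : ∀ s i, ((Vc i).filter (fun v => ¬(outdegD (PS s) v = 0))).card =
      ((PS s).filter fun e => e.1 ∈ Vc i).card := by
    intro s i
    rw [sum_out_filter (PS s) (Vc i), Finset.card_filter]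
    refine Finset.sum_congr rfl fun v _ => ?_
    have h1 := ((hPS s).1 v).1
    by_cases h : outdegD (PS s) v = 0
    · simp [h]
    · rw [if_pos h]
      omega
  have hincnt : ∀ s i, ((Vc (i+1)).filter (fun v => ¬(indegD (PS s) v = 0))).card =
      ((PS s).filter fun e => e.2 ∈ Vc (i+1)).card := by
    intro s i
    rw [sum_in_filter (PS s) (Vc (i+1)), Finset.card_filter]
    refine Finset.sum_congr rfl fun v _ => ?_
    have h1 := ((hPS s).1 v).2
    by_cases h : indegD (PS s) v = 0
    · simp [h]
    · rw [if_pos h]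
      omega
  have hcards : ∀ i s, (Asf i s).card = (Bsf i s).card := by
    intro i s
    have h1 : (Asf i s).card + ((Vc i).filter (fun v => ¬(outdegD (PS s) v = 0))).card
        = m := by
      rw [hAsf]
      rw [Finset.card_filter_add_card_filter_not
        (p := fun v => outdegD (PS s) v = 0)]
      exact hVccard i
    have h2 : (Bsf i s).card + ((Vc (i+1)).filter (fun v => ¬(indegD (PS s) v = 0))).card
        = m := by
      rw [hBsf]
      rw [Finset.card_filter_add_card_filter_not
        (p := fun v => indegD (PS s) v = 0)]
      exact hVccard (i+1)
    have h3 := houtcnt s i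
    have h4 := hincnt s i
    have h5 := hbal s i
    omega
  -- the deficiency sets are small
  have hsdiffA : ∀ i s, Vc i \ Asf i s = (Vc i).filter (fun v => ¬(outdegD (PS s) v = 0)) := by
    intro i s
    ext v
    simp only [hAsf, mem_sdiff, mem_filter]
    tauto
  have hsdiffB : ∀ i s, Vc (i+1) \ Bsf i s =
      (Vc (i+1)).filter (fun v => ¬(indegD (PS s) v = 0)) := by
    intro i s
    ext v
    simp only [hBsf, mem_sdiff, mem_filter]
    tauto
  have hsuppout : ∀ i s, (Vc i).filter (fun v => ¬(outdegD (PS s) v = 0)) ⊆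
      suppD (PS s) ∩ Vc i := by
    intro i s v hv
    obtain ⟨hv1, hv2⟩ := mem_filter.mp hv
    refine mem_inter.mpr ⟨?_, hv1⟩
    have : ((PS s).filter fun e => e.1 = v).Nonempty := by
      rw [← card_pos]
      unfold outdegD at hv2
      omega
    obtain ⟨e, he⟩ := this
    obtain ⟨heP, he1⟩ := mem_filter.mp he
    exact mem_union_left _ (mem_image.mpr ⟨e, heP, he1⟩)
  have hsuppin : ∀ i s, (Vc (i+1)).filter (fun v => ¬(indegD (PS s) v = 0)) ⊆
      suppD (PS s) ∩ Vc (i+1) := by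
    intro i s v hv
    obtain ⟨hv1, hv2⟩ := mem_filter.mp hv
    refine mem_inter.mpr ⟨?_, hv1⟩
    have : ((PS s).filter fun e => e.2 = v).Nonempty := by
      rw [← card_pos]
      unfold indegD at hv2
      omega
    obtain ⟨e, he⟩ := this
    obtain ⟨heP, he2⟩ := mem_filter.mp he
    exact mem_union_right _ (mem_image.mpr ⟨e, heP, he2⟩)
  have hdefA : ∀ i s, ((Vc i \ Asf i s).card : ℝ) ≤ ε*m := by
    intro i s
    calc ((Vc i \ Asf i s).card : ℝ) ≤ ((suppD (PS s) ∩ Vc i).card : ℝ) := by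
          exact_mod_cast card_le_card ((hsdiffA i s) ▸ hsuppout i s)
      _ ≤ ε*m := hsupp s i
  have hdefB : ∀ i s, ((Vc (i+1) \ Bsf i s).card : ℝ) ≤ ε*m := by
    intro i s
    calc ((Vc (i+1) \ Bsf i s).card : ℝ) ≤ ((suppD (PS s) ∩ Vc (i+1)).card : ℝ) := by
          exact_mod_cast card_le_card ((hsdiffB i s) ▸ hsuppin i s)
      _ ≤ ε*m := hsupp s (i+1)
  -- the busy indices are few
  have hbusyb : ∀ i, (((univ : Finset (Fin q)).filter
      fun s => ¬(Asf i s = Vc i ∧ Bsf i s = Vc (i+1))).card : ℝ) ≤ 2*ℓ*ε*m := by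
    intro i
    have hsub : ((univ : Finset (Fin q)).filter
        fun s => ¬(Asf i s = Vc i ∧ Bsf i s = Vc (i+1))) ⊆
        ((univ : Finset (Fin q)).filter fun s => (suppD (PS s) ∩ Vc i).Nonempty) ∪
        ((univ : Finset (Fin q)).filter fun s => (suppD (PS s) ∩ Vc (i+1)).Nonempty) := by
      intro s hs
      have hs2 := (mem_filter.mp hs).2
      by_contra hcon
      simp only [mem_union, mem_filter, mem_univ, true_and, not_or, not_nonempty_iff_eq_empty]
        at hcon
      apply hs2
      constructor
      · rw [hAsf]
        apply Finset.filter_true_of_mem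
        intro v hv
        by_contra hv2
        have : v ∈ suppD (PS s) ∩ Vc i := hsuppout i s (mem_filter.mpr ⟨hv, hv2⟩)
        rw [hcon.1] at this
        exact absurd this (notMem_empty v)
      · rw [hBsf]
        apply Finset.filter_true_of_mem
        intro v hv
        by_contra hv2
        have : v ∈ suppD (PS s) ∩ Vc (i+1) := hsuppin i s (mem_filter.mpr ⟨hv, hv2⟩)
        rw [hcon.2] at this
        exact absurd this (notMem_empty v)
    have hk' : ℓ*m/k ≤ ℓ*ε*m := by
      have h1 : (ℓ:ℝ)*m/k = (ℓ*m)*(1/k) := by ring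
      have h2 : (0:ℝ) ≤ (ℓ:ℝ)*m := by positivity
      calc (ℓ:ℝ)*m/k = (ℓ*m)*(1/k) := h1
        _ ≤ (ℓ*m)*ε := mul_le_mul_of_nonneg_left h1k h2
        _ = ℓ*ε*m := by ring
    calc (((univ : Finset (Fin q)).filter
        fun s => ¬(Asf i s = Vc i ∧ Bsf i s = Vc (i+1))).card : ℝ)
        ≤ ((((univ : Finset (Fin q)).filter fun s => (suppD (PS s) ∩ Vc i).Nonempty) ∪
          ((univ : Finset (Fin q)).filter
            fun s => (suppD (PS s) ∩ Vc (i+1)).Nonempty)).card : ℝ) := by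
          exact_mod_cast card_le_card hsub
      _ ≤ (((univ : Finset (Fin q)).filter
            fun s => (suppD (PS s) ∩ Vc i).Nonempty).card : ℝ) +
          (((univ : Finset (Fin q)).filter
            fun s => (suppD (PS s) ∩ Vc (i+1)).Nonempty).card : ℝ) := by
          exact_mod_cast card_union_le _ _
      _ ≤ ℓ*m/k + ℓ*m/k := add_le_add (hmeet i) (hmeet (i+1))
      _ ≤ 2*ℓ*ε*m := by linarith
  -- apply per_pair for every i
  have hex : ∀ i : ZMod k, ∃ M : Fin q → Finset (V × V),
      (∀ s, M s ⊆ Hc i ∧ matchingProp (M s) (Asf i s) (Bsf i s)) ∧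
      (∀ s s', s ≠ s' → Disjoint (M s) (M s')) := by
    intro i
    apply per_pair (Hc i) (Vc i) (Vc (i+1)) m q μ ε ρ ℓ (Asf i) (Bsf i)
      (hVccard i) (hVccard (i+1)) (hHcends i)
    · intro a ha
      have : outdegD (Hc i) a = (G.filter fun e => e.1 = a ∧ e.2 ∈ Vc (i + 1)).card := by
        unfold outdegD
        rw [houtHc i a ha]
      rw [this]
      exact hdout i a ha
    · intro b hb
      have : indegD (Hc i) b = (G.filter fun e => e.2 = b ∧ e.1 ∈ Vc i).card := by
        unfold indegD
        rw [hinHc i b]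
      rw [this]
      exact hdin i b hb
    · intro s
      exact filter_subset _ _
    · intro s
      exact filter_subset _ _
    · exact fun s => hcards i s
    · exact fun s => hdefA i s
    · exact fun s => hdefB i s
    · exact hbusyb i
    · exact hq
    · exact hμ0
    · exact hμ
    · exact hε
    · exact hεb
    · exact hρ
    · exact hρ'
    · exact hℓ
  choose M hM1 hM2 using hex
  -- basic membership facts for the matchings
  have hMends : ∀ i s, ∀ e ∈ M i s, e.1 ∈ Vc i ∧ e.2 ∈ Vc (i+1) := by
    intro i s e he
    have := ((hM1 i s).2).2.2 e he
    exact ⟨filter_subset _ _ this.1, filter_subset _ _ this.2⟩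
  have hMG : ∀ i s, M i s ⊆ G := fun i s => ((hM1 i s).1).trans (hHcG i)
  -- matchings over distinct i are disjoint
  have hMdisjI : ∀ s s' : Fin q, ∀ i i' : ZMod k, i ≠ i' → Disjoint (M i s) (M i' s') := by
    intro s s' i i' hii'
    rw [Finset.disjoint_left]
    intro e he he'
    exact hii' (huniq e.1 i i' (hMends i s e he).1 (hMends i' s' e he').1)
  -- the 1-factors
  set F : Fin q → Finset (V × V) :=
    fun s => PS s ∪ (univ : Finset (ZMod k)).biUnion (fun i => M i s) with hF
  have hPSdisjM : ∀ i s, Disjoint (PS s) (M i s) := by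
    intro i s
    rw [Finset.disjoint_right]
    intro e he
    have h1 : e.1 ∈ Asf i s := (((hM1 i s).2).2.2 e he).1
    have h2 : outdegD (PS s) e.1 = 0 := (mem_filter.mp h1).2
    intro hePS
    have : e ∈ (PS s).filter (fun e' => e'.1 = e.1) := mem_filter.mpr ⟨hePS, rfl⟩
    unfold outdegD at h2
    rw [Finset.card_eq_zero.mp h2] at this
    exact absurd this (notMem_empty e)
  have hdisjPSbiU : ∀ s, Disjoint (PS s) ((univ : Finset (ZMod k)).biUnion (fun i => M i s)) := by
    intro s
    rw [Finset.disjoint_right]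
    intro e he
    obtain ⟨i, -, hei⟩ := mem_biUnion.mp he
    exact Finset.disjoint_right.mp (hPSdisjM i s) hei
  refine ⟨F, ?_, ?_⟩
  · intro s
    refine ⟨?_, subset_union_left, ?_⟩
    · intro v
      obtain ⟨i₀, hi₀⟩ := hVccover v
      -- additivity of degrees
      have houtadd : outdegD (F s) v = outdegD (PS s) v +
          outdegD ((univ : Finset (ZMod k)).biUnion (fun i => M i s)) v := by
        unfold outdegD
        rw [hF, filter_union]
        exact card_union_of_disjoint (Finset.disjoint_filter_filter (hdisjPSbiU s))
      have hinadd : indegD (F s) v = indegD (PS s) v +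
          indegD ((univ : Finset (ZMod k)).biUnion (fun i => M i s)) v := by
        unfold indegD
        rw [hF, filter_union]
        exact card_union_of_disjoint (Finset.disjoint_filter_filter (hdisjPSbiU s))
      have houtbiu : outdegD ((univ : Finset (ZMod k)).biUnion (fun i => M i s)) v =
          ∑ i : ZMod k, outdegD (M i s) v := by
        unfold outdegD
        rw [filter_biUnion]
        apply card_biUnion
        intro i _ i' _ hii'
        exact Finset.disjoint_filter_filter (hMdisjI s s i i' hii')
      have hinbiu : indegD ((univ : Finset (ZMod k)).biUnion (fun i => M i s)) v =
          ∑ i : ZMod k, indegD (M i s) v := by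
        unfold indegD
        rw [filter_biUnion]
        apply card_biUnion
        intro i _ i' _ hii'
        exact Finset.disjoint_filter_filter (hMdisjI s s i i' hii')
      have houtsum : ∑ i : ZMod k, outdegD (M i s) v = if v ∈ Asf i₀ s then 1 else 0 := by
        rw [Finset.sum_eq_single i₀]
        · exact ((hM1 i₀ s).2).1 v
        · intro j _ hj
          rw [((hM1 j s).2).1 v, if_neg]
          intro hv
          have : v ∈ Vc j := filter_subset _ _ hv
          exact hj (huniq v j i₀ this hi₀)
        · intro h
          exact absurd (mem_univ i₀) h
      have hinsum : ∑ i : ZMod k, indegD (M i s) v = if v ∈ Bsf (i₀-1) s then 1 else 0 := by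
        rw [Finset.sum_eq_single (i₀-1)]
        · exact ((hM1 (i₀-1) s).2).2.1 v
        · intro j _ hj
          rw [((hM1 j s).2).2.1 v, if_neg]
          intro hv
          have hv2 : v ∈ Vc (j+1) := filter_subset _ _ hv
          have : j + 1 = i₀ := huniq v (j+1) i₀ hv2 hi₀
          apply hj
          rw [← this]
          ring
        · intro h
          exact absurd (mem_univ (i₀-1)) h
      have hod := ((hPS s).1 v).1
      have hid := ((hPS s).1 v).2
      constructor
      · rw [houtadd, houtbiu, houtsum]
        by_cases h : outdegD (PS s) v = 0
        · rw [if_pos, h]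
          exact mem_filter.mpr ⟨hi₀, h⟩
        · rw [if_neg]
          · omega
          · intro hv
            exact h (mem_filter.mp hv).2
      · have hi₀' : v ∈ Vc ((i₀-1)+1) := by
          rw [sub_add_cancel]
          exact hi₀
        rw [hinadd, hinbiu, hinsum]
        by_cases h : indegD (PS s) v = 0
        · rw [if_pos, h]
          exact mem_filter.mpr ⟨hi₀', h⟩
        · rw [if_neg]
          · omega
          · intro hv
            exact h (mem_filter.mp hv).2
    · intro e he
      obtain ⟨heF, hePS⟩ := mem_sdiff.mp he
      rcases mem_union.mp heF with h | h
      · exact absurd h hePS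
      · obtain ⟨i, -, hei⟩ := mem_biUnion.mp h
        exact hMG i s hei
  · intro s t hst
    rw [Finset.disjoint_left]
    intro e he he'
    obtain ⟨heF, hePS⟩ := mem_sdiff.mp he
    obtain ⟨heF', hePS'⟩ := mem_sdiff.mp he'
    have h1 : e ∈ (univ : Finset (ZMod k)).biUnion (fun i => M i s) := by
      rcases mem_union.mp heF with h | h
      · exact absurd h hePS
      · exact h
    have h2 : e ∈ (univ : Finset (ZMod k)).biUnion (fun i => M i t) := by
      rcases mem_union.mp heF' with h | h
      · exact absurd h hePS'
      · exact h
    obtain ⟨i, -, hei⟩ := mem_biUnion.mp h1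
    obtain ⟨i', -, hei'⟩ := mem_biUnion.mp h2
    have hii' : i = i' := huniq e.1 i i' (hMends i s e hei).1 (hMends i' t e hei').1
    subst hii'
    exact Finset.disjoint_left.mp (hM2 i s t hst) hei hei'
end
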